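/- arXiv:1309.2857 — 10 statements merged into one kernel-verified Lean document; each statement's English description precedes it below -/
import Mathlib

section
/- Let Q be a nonnegative (sub-Markov-type) bounded linear operator on B_1 satisfying QV ≤ δV + L·1_X with δ ∈ (0,1), L > 0. Then its adjoint Q' on the dual space B_1' satisfies the Doeblin–Fortet inequality ‖Q' f'‖_1 ≤ δ ‖f'‖_1 + L ‖f'‖_0 for all f' ∈ B_1', where ‖f'‖_0 := sup{|f'(f)| : f ∈ B_0, ‖f‖_0 ≤ 1} is the semi-norm induced by the bounded functions B_0 ⊂ B_1. -/
/- STATEMENT 2: If `Q` is a nonnegative linear operator on the weighted space `B₁` satisfying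
`Q V ≤ δ V + L·1`, then its adjoint satisfies the Doeblin–Fortet inequality
`‖Q' f'‖₁ ≤ δ ‖f'‖₁ + L ‖f'‖₀`.  The dual norm `‖f'‖₁` (resp. the semi-norm `‖f'‖₀`) is
encoded through arbitrary upper bounds `M` (resp. `m`) of `|f'(f)|` over the unit ball of
`B₁` (functions with `|f| ≤ V`) (resp. of `B₀`, functions with `|f| ≤ 1`). -/
theorem dual_doeblin_fortet
    (X : Type*) [MeasurableSpace X]
    (V : X → ℝ) (hV : ∀ x, 1 ≤ V x)
    (Q : Module.End ℝ (X → ℝ))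
    (hpos : ∀ f : X → ℝ, (∀ x, 0 ≤ f x) → ∀ x, 0 ≤ Q f x)
    (δ L : ℝ) (hδ0 : 0 < δ) (hδ1 : δ < 1) (hL : 0 < L)
    (hdrift : ∀ x, Q V x ≤ δ * V x + L)
    (f' : (X → ℝ) →ₗ[ℝ] ℝ) (M m : ℝ)
    (hM : ∀ f : X → ℝ, (∀ x, |f x| ≤ V x) → |f' f| ≤ M)
    (hm : ∀ f : X → ℝ, (∀ x, |f x| ≤ 1) → |f' f| ≤ m) :
    ∀ f : X → ℝ, (∀ x, |f x| ≤ V x) → |f' (Q f)| ≤ δ * M + L * m := by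

  intro f hf
  -- |Q f| ≤ Q V pointwise by positivity
  have hQV : ∀ x, |Q f x| ≤ Q V x := by
    intro x
    have h1 : 0 ≤ Q (V - f) x := hpos _ (fun y => by
      have := abs_le.mp (hf y); simp only [Pi.sub_apply]; linarith) x
    have h2 : 0 ≤ Q (V + f) x := hpos _ (fun y => by
      have := abs_le.mp (hf y); simp only [Pi.add_apply]; linarith) x
    rw [map_sub] at h1
    rw [map_add] at h2
    simp only [Pi.sub_apply, Pi.add_apply] at h1 h2
    rw [abs_le]; constructor <;> linarith
  have hub : ∀ x, |Q f x| ≤ δ * V x + L := fun x => (hQV x).trans (hdrift x)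
  set g : X → ℝ := fun x => max (-(δ * V x)) (min (Q f x) (δ * V x)) with hg
  have hVpos : ∀ x, 0 < δ * V x := fun x => mul_pos hδ0 (lt_of_lt_of_le one_pos (hV x))
  have hgle : ∀ x, |g x| ≤ δ * V x := by
    intro x
    rw [abs_le]
    constructor
    · exact le_max_left _ _
    · exact max_le (by linarith [hVpos x]) (min_le_right _ _)
  have hhle : ∀ x, |Q f x - g x| ≤ L := by
    intro x
    have hu := abs_le.mp (hub x)
    rcases le_total (Q f x) (δ * V x) with h | h
    · rcases le_total (Q f x) (-(δ * V x)) with h2 | h2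
      · have : g x = -(δ * V x) := by
          rw [hg]; simp [min_eq_left h, max_eq_left h2]
        rw [this, abs_le]; constructor <;> linarith
      · have : g x = Q f x := by
          rw [hg]; simp [min_eq_left h, max_eq_right h2]
        rw [this]; simp; linarith
    · have : g x = δ * V x := by
        rw [hg]; simp [min_eq_right h, max_eq_right (by linarith [hVpos x] : -(δ * V x) ≤ δ * V x)]
      rw [this, abs_le]; constructor <;> linarith
  have hgM : |f' g| ≤ δ * M := by
    have hb : ∀ x, |(δ⁻¹ • g) x| ≤ V x := by
      intro x
      rw [Pi.smul_apply, smul_eq_mul, abs_mul, abs_of_pos (inv_pos.mpr hδ0)]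
      rw [inv_mul_le_iff₀ hδ0]
      exact hgle x
    have h1 := hM _ hb
    have h2 : f' g = δ * f' (δ⁻¹ • g) := by
      rw [← smul_eq_mul, ← map_smul, smul_inv_smul₀ hδ0.ne']
    rw [h2, abs_mul, abs_of_pos hδ0]
    exact mul_le_mul_of_nonneg_left h1 hδ0.le
  have hhM : |f' (Q f - g)| ≤ L * m := by
    have hb : ∀ x, |(L⁻¹ • (Q f - g)) x| ≤ 1 := by
      intro x
      rw [Pi.smul_apply, smul_eq_mul, abs_mul, abs_of_pos (inv_pos.mpr hL)]
      rw [inv_mul_le_iff₀ hL, mul_one]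
      exact hhle x
    have h1 := hm _ hb
    have h2 : f' (Q f - g) = L * f' (L⁻¹ • (Q f - g)) := by
      rw [← smul_eq_mul, ← map_smul, smul_inv_smul₀ hL.ne']
    rw [h2, abs_mul, abs_of_pos hL]
    exact mul_le_mul_of_nonneg_left h1 hL.le
  have hsplit : Q f = g + (Q f - g) := by abel
  calc |f' (Q f)| = |f' g + f' (Q f - g)| := by rw [hsplit, map_add]; rw [← hsplit]
    _ ≤ |f' g| + |f' (Q f - g)| := abs_add_le _ _
    _ ≤ δ * M + L * m := add_le_add hgM hhM
end

section
/- Assume the uniform weak drift condition: P and Q := P̂_k satisfy TV ≤ δV + L·1_X for T ∈ {P, Q} with δ ∈ (0,1), L > 0, and assume Q is V-geometrically ergodic with rate ρ_k ∈ (0,1) and constant C_k: ‖Q^n f − π̂_k(f)φ_k‖_1 ≤ C_k ρ_k^n ‖f‖_1, where π̂_k is a Q-invariant positive measure with π̂_k(V) < ∞ and Qφ_k = φ_k, π̂_k(φ_k) = 1, φ_k bounded nonnegative. Let π be P-invariant with π(V) < ∞. Then for every n ≥ 1, the total variation distance satisfies ‖π̂_k − π‖_TV ≤ π̂_k(1_X)·|1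 − π(φ_k)| + (L/(1−δ))·(2C_k ρ_k^n + n·A·Δ_k), where Δ_k := ‖P̂_k − P‖_{0,1} and A := 1 + L/(1−δ). -/
/- STATEMENT 4: Under the uniform weak drift condition for `P` and `Q := P̂ₖ`, if `Q` is
`V`-geometrically ergodic with rate `ρₖ` and constant `Cₖ` (relative to its invariant positive
measure `π̂ₖ` and fixed function `φₖ`), and `π` is `P`-invariant, then for every `n ≥ 1`,
`‖π̂ₖ − π‖_TV ≤ π̂ₖ(1)·|1 − π(φₖ)| + (L/(1−δ))·(2·Cₖ·ρₖⁿ + n·A·Δₖ)`, where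
`Δₖ = ‖P̂ₖ − P‖_{0,1}` (encoded by an upper bound `Δ`) and `A = 1 + L/(1−δ)`.
Measures are modelled as positive linear functionals; the total variation distance is
encoded by testing against all `f` with `‖f‖₀ ≤ 1`. -/
theorem tv_bound_geometric_n
    (X : Type*) [MeasurableSpace X]
    (V : X → ℝ) (hV : ∀ x, 1 ≤ V x)
    (P Q : Module.End ℝ (X → ℝ))
    (hPpos : ∀ f : X → ℝ, (∀ x, 0 ≤ f x) → ∀ x, 0 ≤ P f x)
    (hPmarkov : P (fun _ => (1 : ℝ)) = fun _ => (1 : ℝ))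
    (hQpos : ∀ f : X → ℝ, (∀ x, 0 ≤ f x) → ∀ x, 0 ≤ Q f x)
    (hQsub : ∀ x, Q (fun _ => (1 : ℝ)) x ≤ 1)
    (δ L : ℝ) (hδ0 : 0 < δ) (hδ1 : δ < 1) (hL : 0 < L)
    (hPdrift : ∀ x, P V x ≤ δ * V x + L)
    (hQdrift : ∀ x, Q V x ≤ δ * V x + L)
    -- invariant probability measure of P
    (π : (X → ℝ) →ₗ[ℝ] ℝ)
    (hπpos : ∀ f : X → ℝ, (∀ x, 0 ≤ f x) → 0 ≤ π f)
    (hπ1 : π (fun _ => (1 : ℝ)) = 1)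
    (hπinv : ∀ f : X → ℝ, π (P f) = π f)
    -- invariant positive measure of Q and fixed function φ
    (πQ : (X → ℝ) →ₗ[ℝ] ℝ)
    (hπQpos : ∀ f : X → ℝ, (∀ x, 0 ≤ f x) → 0 ≤ πQ f)
    (hπQinv : ∀ f : X → ℝ, πQ (Q f) = πQ f)
    (φ : X → ℝ) (hφpos : ∀ x, 0 ≤ φ x) (hφbd : ∃ b : ℝ, ∀ x, φ x ≤ b)
    (hQφ : Q φ = φ) (hπQφ : πQ φ = 1)
    -- V-geometric ergodicity of Q with rate ρ and constant C
    (ρ C : ℝ) (hρ0 : 0 < ρ) (hρ1 : ρ < 1) (hC : 0 < C)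
    (hgeo : ∀ (n : ℕ) (f : X → ℝ), (∀ x, |f x| ≤ V x) →
      ∀ x, |(Q ^ n) f x - πQ f * φ x| ≤ C * ρ ^ n * V x)
    -- Δ is an upper bound for ‖Q − P‖_{0,1}
    (Δ : ℝ)
    (hΔ : ∀ g : X → ℝ, (∀ x, |g x| ≤ 1) → ∀ x, |(Q - P) g x| ≤ Δ * V x) :
    ∀ n : ℕ, 1 ≤ n → ∀ f : X → ℝ, (∀ x, |f x| ≤ 1) →
      |πQ f - π f| ≤
        πQ (fun _ => (1 : ℝ)) * |1 - π φ| +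
          L / (1 - δ) * (2 * C * ρ ^ n + n * (1 + L / (1 - δ)) * Δ) := by

  intro n hn f hf
  -- X is nonempty
  have hX : Nonempty X := by
    by_contra h
    rw [not_nonempty_iff] at h
    have h0 : (fun _ : X => (1:ℝ)) = 0 := funext fun x => (h.false x).elim
    rw [h0, map_zero] at hπ1
    exact one_ne_zero hπ1.symm
  obtain ⟨x0⟩ := hX
  -- generic positivity/monotonicity facts for functionals
  have hmono : ∀ (μ : (X → ℝ) →ₗ[ℝ] ℝ), (∀ g : X → ℝ, (∀ x, 0 ≤ g x) → 0 ≤ μ g) →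
      ∀ g h : X → ℝ, (∀ x, g x ≤ h x) → μ g ≤ μ h := by
    intro μ hμ g h hgh
    have := hμ (h - g) (fun x => by simpa [Pi.sub_apply, sub_nonneg] using hgh x)
    rw [map_sub] at this; linarith
  have habs : ∀ (μ : (X → ℝ) →ₗ[ℝ] ℝ), (∀ g : X → ℝ, (∀ x, 0 ≤ g x) → 0 ≤ μ g) →
      ∀ h w : X → ℝ, (∀ x, |h x| ≤ w x) → |μ h| ≤ μ w := by
    intro μ hμ h w hw
    have h1 : 0 ≤ μ (w - h) := hμ _ (fun x => by
      have := (abs_le.mp (hw x)).2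
      simpa [Pi.sub_apply, sub_nonneg] using this)
    have h2 : 0 ≤ μ (w + h) := hμ _ (fun x => by
      have := (abs_le.mp (hw x)).1
      have : -(w x) ≤ h x := le_trans (by linarith [abs_nonneg (h x), hw x]) this
      simpa [Pi.add_apply] using by linarith)
    rw [map_sub] at h1; rw [map_add] at h2
    rw [abs_le]; constructor <;> linarith
  -- π V ≤ L / (1 - δ)
  have hδ' : (0:ℝ) < 1 - δ := by linarith
  have hπV : π V ≤ L / (1 - δ) := by
    have h2 : π (P V) ≤ δ * π V + L := by
      have h := hmono π hπpos (P V) (δ • V + L • (fun _ => (1:ℝ))) (fun x => by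
        simpa [Pi.add_apply, Pi.smul_apply, smul_eq_mul] using hPdrift x)
      rw [map_add, map_smul, map_smul, hπ1] at h
      simpa [smul_eq_mul] using h
    have h1 : π (P V) = π V := hπinv V
    rw [le_div_iff₀ hδ']
    nlinarith
  have hπV0 : 0 ≤ π V := hπpos V (fun x => le_trans zero_le_one (hV x))
  -- Δ ≥ 0
  have hΔ0 : 0 ≤ Δ := by
    have h := hΔ (fun _ => 0) (fun x => by simp) x0
    have h0 : (Q - P) (fun _ : X => (0:ℝ)) = 0 := by
      rw [show (fun _ : X => (0:ℝ)) = (0 : X → ℝ) from rfl, map_zero]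
    rw [h0] at h
    simp only [Pi.zero_apply, abs_zero] at h
    nlinarith [hV x0]
  -- |Q g| ≤ 1 when |g| ≤ 1
  have hQ1 : ∀ g : X → ℝ, (∀ x, |g x| ≤ 1) → ∀ x, |Q g x| ≤ 1 := by
    intro g hg x
    have ha : 0 ≤ Q ((fun _ => (1:ℝ)) - g) x := hQpos _ (fun y => by
      simpa [Pi.sub_apply, sub_nonneg] using (abs_le.mp (hg y)).2) x
    have hb : 0 ≤ Q ((fun _ => (1:ℝ)) + g) x := hQpos _ (fun y => by
      have := (abs_le.mp (hg y)).1
      simpa [Pi.add_apply] using by linarith) x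
    rw [map_sub] at ha; rw [map_add] at hb
    simp only [Pi.sub_apply, Pi.add_apply] at ha hb
    have h1 := hQsub x
    rw [abs_le]; constructor <;> linarith
  have hQpow : ∀ (m : ℕ) (g : X → ℝ), (∀ x, |g x| ≤ 1) → ∀ x, |(Q ^ m) g x| ≤ 1 := by
    intro m
    induction m with
    | zero => intro g hg x; simpa using hg x
    | succ m ih =>
      intro g hg x
      have e : (Q ^ (m+1)) g = (Q ^ m) (Q g) := by rw [pow_succ]; rfl
      rw [e]
      exact ih (Q g) (hQ1 g hg) x
  -- π (Pᵐ g) = π g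
  have hπPn : ∀ (m : ℕ) (g : X → ℝ), π ((P ^ m) g) = π g := by
    intro m
    induction m with
    | zero => intro g; simp
    | succ m ih =>
      intro g
      have e : (P ^ (m+1)) g = (P ^ m) (P g) := by rw [pow_succ]; rfl
      rw [e, ih (P g), hπinv]
  -- telescoping bound
  have htel : ∀ (m : ℕ) (g : X → ℝ), (∀ x, |g x| ≤ 1) →
      |π ((Q ^ m) g) - π ((P ^ m) g)| ≤ m * (Δ * π V) := by
    intro m
    induction m with
    | zero => intro g hg; simp
    | succ m ih =>
      intro g hg
      have hQm := hQpow m g hg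
      have hr : π (fun x => Δ * V x) = Δ * π V := map_smul π Δ V
      have hd : |π ((Q - P) ((Q ^ m) g))| ≤ Δ * π V := by
        have h := habs π hπpos ((Q - P) ((Q ^ m) g)) (fun x => Δ * V x)
          (fun x => hΔ _ hQm x)
        rwa [hr] at h
      have e1 : π ((Q ^ (m+1)) g) = π ((Q - P) ((Q ^ m) g)) + π ((Q ^ m) g) := by
        have e : (Q ^ (m+1)) g = Q ((Q ^ m) g) := by rw [pow_succ']; rfl
        have e' : Q ((Q ^ m) g) = (Q - P) ((Q ^ m) g) + P ((Q ^ m) g) := by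
          simp [LinearMap.sub_apply]
        rw [e, e', map_add, hπinv]
      have e2 : π ((P ^ (m+1)) g) = π ((P ^ m) g) := by
        have e : (P ^ (m+1)) g = P ((P ^ m) g) := by rw [pow_succ']; rfl
        rw [e, hπinv]
      have hih := ih g hg
      rw [e1, e2]
      have habs3 : |π ((Q - P) ((Q ^ m) g)) + π ((Q ^ m) g) - π ((P ^ m) g)|
          ≤ |π ((Q - P) ((Q ^ m) g))| + |π ((Q ^ m) g) - π ((P ^ m) g)| := by
        have := abs_add_le (π ((Q - P) ((Q ^ m) g))) (π ((Q ^ m) g) - π ((P ^ m) g))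
        calc |π ((Q - P) ((Q ^ m) g)) + π ((Q ^ m) g) - π ((P ^ m) g)|
            = |π ((Q - P) ((Q ^ m) g)) + (π ((Q ^ m) g) - π ((P ^ m) g))| := by ring_nf
          _ ≤ _ := this
      push_cast
      calc |π ((Q - P) ((Q ^ m) g)) + π ((Q ^ m) g) - π ((P ^ m) g)|
          ≤ |π ((Q - P) ((Q ^ m) g))| + |π ((Q ^ m) g) - π ((P ^ m) g)| := habs3
        _ ≤ Δ * π V + m * (Δ * π V) := add_le_add hd hih
        _ = (m + 1) * (Δ * π V) := by ring
  -- geometric ergodicity term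
  have hfV : ∀ x, |f x| ≤ V x := fun x => (hf x).trans (hV x)
  have hgeoπ : |π ((Q ^ n) f) - πQ f * π φ| ≤ C * ρ ^ n * π V := by
    have h := hgeo n f hfV
    have hr : π (fun x => C * ρ ^ n * V x) = C * ρ ^ n * π V := map_smul π (C * ρ ^ n) V
    have hh := habs π hπpos ((Q ^ n) f - πQ f • φ) (fun x => C * ρ ^ n * V x)
      (fun x => by simpa [Pi.sub_apply, Pi.smul_apply, smul_eq_mul] using h x)
    rw [map_sub, map_smul, hr] at hh
    simpa [smul_eq_mul] using hh
  -- |πQ f| ≤ πQ 1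
  have hπQf : |πQ f| ≤ πQ (fun _ => (1:ℝ)) :=
    habs πQ hπQpos f (fun _ => (1:ℝ)) hf
  -- decomposition
  have key : πQ f - π f = πQ f * (1 - π φ) + (πQ f * π φ - π ((Q ^ n) f))
      + (π ((Q ^ n) f) - π ((P ^ n) f)) := by
    rw [← hπPn n f]; ring
  have hstep : |πQ f - π f| ≤ |πQ f| * |1 - π φ| + C * ρ ^ n * π V + n * (Δ * π V) := by
    rw [key]
    calc |πQ f * (1 - π φ) + (πQ f * π φ - π ((Q ^ n) f)) + (π ((Q ^ n) f) - π ((P ^ n) f))|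
        ≤ |πQ f * (1 - π φ)| + |πQ f * π φ - π ((Q ^ n) f)| + |π ((Q ^ n) f) - π ((P ^ n) f)| :=
          abs_add_three _ _ _
      _ ≤ |πQ f| * |1 - π φ| + C * ρ ^ n * π V + n * (Δ * π V) := by
          refine add_le_add (add_le_add (le_of_eq (abs_mul _ _)) ?_) (htel n f hf)
          rw [abs_sub_comm]; exact hgeoπ
  -- final numeric estimate
  have hM : 0 ≤ L / (1 - δ) := le_of_lt (div_pos hL hδ')
  have hcρ : 0 ≤ C * ρ ^ n := by positivity
  have hn0 : (0:ℝ) ≤ n := Nat.cast_nonneg n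
  have hπQ1 : 0 ≤ πQ (fun _ => (1:ℝ)) := hπQpos _ (fun x => zero_le_one)
  have t0 : |πQ f| * |1 - π φ| ≤ πQ (fun _ => (1:ℝ)) * |1 - π φ| :=
    mul_le_mul_of_nonneg_right hπQf (abs_nonneg _)
  have t1 : C * ρ ^ n * π V ≤ L / (1 - δ) * (2 * C * ρ ^ n) := by nlinarith
  have hMM : π V ≤ L / (1 - δ) * (1 + L / (1 - δ)) := by nlinarith
  have t2 : (n : ℝ) * (Δ * π V) ≤ L / (1 - δ) * ((n : ℝ) * (1 + L / (1 - δ)) * Δ) := by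
    nlinarith [mul_nonneg hn0 hΔ0]
  calc |πQ f - π f| ≤ |πQ f| * |1 - π φ| + C * ρ ^ n * π V + n * (Δ * π V) := hstep
    _ ≤ πQ (fun _ => (1:ℝ)) * |1 - π φ| + L / (1 - δ) * (2 * C * ρ ^ n)
        + L / (1 - δ) * ((n : ℝ) * (1 + L / (1 - δ)) * Δ) := add_le_add (add_le_add t0 t1) t2
    _ = πQ (fun _ => (1:ℝ)) * |1 - π φ| +
          L / (1 - δ) * (2 * C * ρ ^ n + n * (1 + L / (1 - δ)) * Δ) := by ring
end

section
/- Under the hypotheses of the previous estimate, choosing n := max(0, ⌊ln Δ_k / ln ρ_k⌋) yields the explicit bound ‖π̂_k − π‖_TV ≤ π̂_k(1_X)·|1 − π(φ_k)| + (L/(1−δ))·(2C_k/ρ_k + A·|ln Δ_k|/ln(ρ_k^{−1}))·Δ_k, where A = 1 + L/(1−δ) and Δ_k = ‖P̂_k − P‖_{0,1}. -/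
/- STATEMENT 5: Under the hypotheses of the previous estimate (Statement 4), choosing
`n := max(0, ⌊ln Δ / ln ρ⌋)` yields the explicit bound
`‖π̂ₖ − π‖_TV ≤ π̂ₖ(1)·|1 − π(φₖ)| + (L/(1−δ))·(2C/ρ + A·|ln Δ|/ln(ρ⁻¹))·Δ`,
with `A = 1 + L/(1−δ)` and `Δ = ‖P̂ₖ − P‖_{0,1}` (here `0 < Δ ≤ 1`). -/
theorem tv_bound_log_explicit
    (X : Type*) [MeasurableSpace X]
    (V : X → ℝ) (hV : ∀ x, 1 ≤ V x)
    (P Q : Module.End ℝ (X → ℝ))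
    (hPpos : ∀ f : X → ℝ, (∀ x, 0 ≤ f x) → ∀ x, 0 ≤ P f x)
    (hPmarkov : P (fun _ => (1 : ℝ)) = fun _ => (1 : ℝ))
    (hQpos : ∀ f : X → ℝ, (∀ x, 0 ≤ f x) → ∀ x, 0 ≤ Q f x)
    (hQsub : ∀ x, Q (fun _ => (1 : ℝ)) x ≤ 1)
    (δ L : ℝ) (hδ0 : 0 < δ) (hδ1 : δ < 1) (hL : 0 < L)
    (hPdrift : ∀ x, P V x ≤ δ * V x + L)
    (hQdrift : ∀ x, Q V x ≤ δ * V x + L)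
    (π : (X → ℝ) →ₗ[ℝ] ℝ)
    (hπpos : ∀ f : X → ℝ, (∀ x, 0 ≤ f x) → 0 ≤ π f)
    (hπ1 : π (fun _ => (1 : ℝ)) = 1)
    (hπinv : ∀ f : X → ℝ, π (P f) = π f)
    (πQ : (X → ℝ) →ₗ[ℝ] ℝ)
    (hπQpos : ∀ f : X → ℝ, (∀ x, 0 ≤ f x) → 0 ≤ πQ f)
    (hπQinv : ∀ f : X → ℝ, πQ (Q f) = πQ f)
    (φ : X → ℝ) (hφpos : ∀ x, 0 ≤ φ x) (hφbd : ∃ b : ℝ, ∀ x, φ x ≤ b)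
    (hQφ : Q φ = φ) (hπQφ : πQ φ = 1)
    (ρ C : ℝ) (hρ0 : 0 < ρ) (hρ1 : ρ < 1) (hC : 0 < C)
    (hgeo : ∀ (n : ℕ) (f : X → ℝ), (∀ x, |f x| ≤ V x) →
      ∀ x, |(Q ^ n) f x - πQ f * φ x| ≤ C * ρ ^ n * V x)
    -- Δ is an upper bound for ‖Q − P‖_{0,1}, with 0 < Δ ≤ 1
    (Δ : ℝ) (hΔ0 : 0 < Δ) (hΔ1 : Δ ≤ 1)
    (hΔ : ∀ g : X → ℝ, (∀ x, |g x| ≤ 1) → ∀ x, |(Q - P) g x| ≤ Δ * V x) :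
    ∀ f : X → ℝ, (∀ x, |f x| ≤ 1) →
      |πQ f - π f| ≤
        πQ (fun _ => (1 : ℝ)) * |1 - π φ| +
          L / (1 - δ) *
            (2 * C / ρ + (1 + L / (1 - δ)) * |Real.log Δ| / Real.log ρ⁻¹) * Δ := by
  intro f hf
  have h1δ : 0 < 1 - δ := by linarith
  -- monotonicity / abs bounds through π
  have hπmono : ∀ g h : X → ℝ, (∀ x, g x ≤ h x) → π g ≤ π h := by
    intro g h hgh
    have h0 : 0 ≤ π (h - g) := hπpos _ (fun x => by simpa using sub_nonneg.2 (hgh x))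
    have heq : π (h - g) = π h - π g := map_sub π h g
    linarith [heq ▸ h0]
  have hπabs : ∀ g h : X → ℝ, (∀ x, |g x| ≤ h x) → |π g| ≤ π h := by
    intro g h hgh
    rw [abs_le]
    constructor
    · have h1 : π (-h) ≤ π g := hπmono _ _ (fun x => by
        simpa using (abs_le.1 (hgh x)).1)
      rw [map_neg] at h1; linarith
    · exact hπmono _ _ (fun x => (abs_le.1 (hgh x)).2)
  have hπQabs : |πQ f| ≤ πQ (fun _ => (1 : ℝ)) := by
    rw [abs_le]
    constructor
    · have h0 : 0 ≤ πQ ((fun _ => (1:ℝ)) + f) := hπQpos _ (fun x => by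
        have := (abs_le.1 (hf x)).1; simp; linarith)
      rw [map_add] at h0; linarith
    · have h0 : 0 ≤ πQ ((fun _ => (1:ℝ)) - f) := hπQpos _ (fun x => by
        have := (abs_le.1 (hf x)).2; simp; linarith)
      rw [map_sub] at h0; linarith
  -- π V ≤ L / (1 - δ)
  have hπV : π V ≤ L / (1 - δ) := by
    have h1 : π (P V) ≤ π (fun x => δ * V x + L) := hπmono _ _ hPdrift
    have heq : π (fun x => δ * V x + L) = δ * π V + L := by
      have hfe : (fun x => δ * V x + L) = δ • V + L • (fun _ : X => (1:ℝ)) := by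
        funext x; simp [Pi.add_apply, Pi.smul_apply, smul_eq_mul]
      rw [hfe, map_add, map_smul, map_smul, hπ1, smul_eq_mul, smul_eq_mul, mul_one]
    rw [hπinv V, heq] at h1
    rw [le_div_iff₀ h1δ]; nlinarith
  -- pointwise bound on Q^j f
  have hQmono : ∀ g h : X → ℝ, (∀ x, g x ≤ h x) → ∀ x, Q g x ≤ Q h x := by
    intro g h hgh x
    have h0 := hQpos (h - g) (fun y => by simpa using sub_nonneg.2 (hgh y)) x
    rw [map_sub] at h0
    simp only [Pi.sub_apply] at h0
    linarith
  have hQbd : ∀ (j : ℕ) (x : X), |(Q ^ j) f x| ≤ 1 := by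
    intro j
    induction j with
    | zero => simpa using hf
    | succ n ih =>
      intro x
      have hq : (Q ^ (n+1)) f = Q ((Q ^ n) f) := by
        rw [pow_succ']; rfl
      rw [hq, abs_le]
      constructor
      · have hlo := hQmono (fun _ => (-1 : ℝ)) ((Q ^ n) f)
          (fun y => (abs_le.1 (ih y)).1) x
        have hneg : Q (fun _ => (-1 : ℝ)) = -(Q (fun _ => (1:ℝ))) := by
          have : (fun _ : X => (-1 : ℝ)) = -(fun _ : X => (1:ℝ)) := by funext y; simp
          rw [this, map_neg]
        rw [hneg] at hlo
        have := hQsub x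
        simp only [Pi.neg_apply] at hlo
        linarith
      · have hhi := hQmono ((Q ^ n) f) (fun _ => (1 : ℝ))
          (fun y => (abs_le.1 (ih y)).2) x
        exact hhi.trans (hQsub x)
  -- telescoping identity
  have htel : ∀ n : ℕ, π f - π ((Q ^ n) f) =
      ∑ j ∈ Finset.range n, π ((P - Q) ((Q ^ j) f)) := by
    intro n
    induction n with
    | zero => simp
    | succ n ih =>
      rw [Finset.sum_range_succ, ← ih]
      have h1 : (Q ^ (n+1)) f = Q ((Q ^ n) f) := by rw [pow_succ']; rfl
      have h2 : π (P ((Q ^ n) f)) = π ((Q ^ n) f) := hπinv _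
      have h3 : π ((P - Q) ((Q ^ n) f)) = π (P ((Q ^ n) f)) - π (Q ((Q ^ n) f)) := by
        rw [LinearMap.sub_apply, map_sub]
      rw [h1]; linarith
  -- each telescoping term bound
  have hterm : ∀ j : ℕ, |π ((P - Q) ((Q ^ j) f))| ≤ Δ * (L / (1 - δ)) := by
    intro j
    have hpt : ∀ x, |(P - Q) ((Q ^ j) f) x| ≤ Δ * V x := by
      intro x
      have h0 := hΔ ((Q ^ j) f) (hQbd j) x
      have heq : (P - Q) ((Q ^ j) f) x = -((Q - P) ((Q ^ j) f) x) := by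
        simp only [LinearMap.sub_apply, Pi.sub_apply]; ring
      rw [heq, abs_neg]; exact h0
    have h1 : |π ((P - Q) ((Q ^ j) f))| ≤ π (fun x => Δ * V x) := hπabs _ _ hpt
    have h2 : π (fun x => Δ * V x) = Δ * π V := by
      have hfe : (fun x => Δ * V x) = Δ • V := by funext x; simp [smul_eq_mul]
      rw [hfe, map_smul, smul_eq_mul]
    rw [h2] at h1
    exact h1.trans (mul_le_mul_of_nonneg_left hπV hΔ0.le)
  -- sum bound
  have hsum : ∀ n : ℕ, |π f - π ((Q ^ n) f)| ≤ (n : ℝ) * (Δ * (L / (1 - δ))) := by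
    intro n
    rw [htel n]
    calc |∑ j ∈ Finset.range n, π ((P - Q) ((Q ^ j) f))|
        ≤ ∑ j ∈ Finset.range n, |π ((P - Q) ((Q ^ j) f))| :=
          Finset.abs_sum_le_sum_abs _ _
      _ ≤ ∑ _j ∈ Finset.range n, Δ * (L / (1 - δ)) :=
          Finset.sum_le_sum (fun j _ => hterm j)
      _ = (n : ℝ) * (Δ * (L / (1 - δ))) := by
          rw [Finset.sum_const, Finset.card_range, nsmul_eq_mul]
  -- geometric bound
  have hgeo2 : ∀ n : ℕ, |π ((Q ^ n) f) - πQ f * π φ| ≤ C * ρ ^ n * (L / (1 - δ)) := by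
    intro n
    have hfV : ∀ x, |f x| ≤ V x := fun x => (hf x).trans (hV x)
    have hpt := hgeo n f hfV
    have h1 : |π (fun x => (Q ^ n) f x - πQ f * φ x)| ≤ π (fun x => C * ρ ^ n * V x) :=
      hπabs _ _ hpt
    have h2 : π (fun x => (Q ^ n) f x - πQ f * φ x) = π ((Q ^ n) f) - πQ f * π φ := by
      have hfe : (fun x => (Q ^ n) f x - πQ f * φ x) = (Q ^ n) f - (πQ f) • φ := by
        funext x; simp [Pi.sub_apply, smul_eq_mul]
      rw [hfe, map_sub, map_smul, smul_eq_mul]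
    have h3 : π (fun x => C * ρ ^ n * V x) = C * ρ ^ n * π V := by
      have hfe : (fun x => C * ρ ^ n * V x) = (C * ρ ^ n) • V := by
        funext x; simp [smul_eq_mul]
      rw [hfe, map_smul, smul_eq_mul]
    rw [h2, h3] at h1
    refine h1.trans (mul_le_mul_of_nonneg_left hπV ?_)
    positivity
  -- general estimate for any n
  have hmain : ∀ n : ℕ, |πQ f - π f| ≤
      πQ (fun _ => (1 : ℝ)) * |1 - π φ| +
        C * ρ ^ n * (L / (1 - δ)) + (n : ℝ) * (Δ * (L / (1 - δ))) := by
    intro n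
    have hid : πQ f - π f =
        πQ f * (1 - π φ) + (πQ f * π φ - π ((Q ^ n) f)) + (π ((Q ^ n) f) - π f) := by
      ring
    rw [hid]
    have t1 : |πQ f * (1 - π φ)| ≤ πQ (fun _ => (1:ℝ)) * |1 - π φ| := by
      rw [abs_mul]
      exact mul_le_mul_of_nonneg_right hπQabs (abs_nonneg _)
    have t2 : |πQ f * π φ - π ((Q ^ n) f)| ≤ C * ρ ^ n * (L / (1 - δ)) := by
      have := hgeo2 n
      rwa [abs_sub_comm] at this
    have t3 : |π ((Q ^ n) f) - π f| ≤ (n : ℝ) * (Δ * (L / (1 - δ))) := by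
      have := hsum n
      rwa [abs_sub_comm] at this
    calc |πQ f * (1 - π φ) + (πQ f * π φ - π ((Q ^ n) f)) + (π ((Q ^ n) f) - π f)|
        ≤ |πQ f * (1 - π φ)| + |πQ f * π φ - π ((Q ^ n) f)| + |π ((Q ^ n) f) - π f| :=
          (abs_add_le _ _).trans (by gcongr; exact abs_add_le _ _)
      _ ≤ _ := by gcongr
  -- now choose n := ⌊log Δ / log ρ⌋₊
  set r : ℝ := Real.log Δ / Real.log ρ with hr
  have hlogΔ : Real.log Δ ≤ 0 := Real.log_nonpos hΔ0.le hΔ1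
  have hlogρ : Real.log ρ < 0 := Real.log_neg hρ0 hρ1
  have hr0 : 0 ≤ r := by
    rw [hr, div_nonneg_iff]
    right; exact ⟨hlogΔ, hlogρ.le⟩
  set n : ℕ := ⌊r⌋₊ with hn
  have hnr : (n : ℝ) ≤ r := Nat.floor_le hr0
  have hrn1 : r < (n : ℝ) + 1 := Nat.lt_floor_add_one r
  -- ρ ^ n ≤ Δ / ρ
  have hρn : ρ ^ n ≤ Δ / ρ := by
    have h1 : ((n : ℝ) + 1) * Real.log ρ < Real.log Δ := by
      rw [hr, div_lt_iff_of_neg hlogρ] at hrn1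
      linarith
    have h2 : Real.log (ρ ^ (n + 1)) < Real.log Δ := by
      rw [Real.log_pow]
      push_cast
      linarith
    have h3 : ρ ^ (n + 1) < Δ := by
      have := (Real.log_lt_log_iff (pow_pos hρ0 (n+1)) hΔ0).1 h2
      exact this
    rw [le_div_iff₀ hρ0]
    calc ρ ^ n * ρ = ρ ^ (n + 1) := by ring
      _ ≤ Δ := h3.le
  -- identity for the log ratio
  have hratio : |Real.log Δ| / Real.log ρ⁻¹ = r := by
    rw [Real.log_inv, abs_of_nonpos hlogΔ, hr, neg_div_neg_eq]
  have hLδ : 0 < L / (1 - δ) := div_pos hL h1δ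
  have hfinal := hmain n
  refine hfinal.trans ?_
  rw [show (1 + L / (1 - δ)) * |Real.log Δ| / Real.log ρ⁻¹ = (1 + L / (1 - δ)) * r from
    by rw [mul_div_assoc, hratio]]
  have e1 : C * ρ ^ n * (L / (1 - δ)) ≤ L / (1 - δ) * (2 * C / ρ) * Δ := by
    have h1 : C * ρ ^ n ≤ C * (Δ / ρ) := mul_le_mul_of_nonneg_left hρn hC.le
    have h2 : C * (Δ / ρ) ≤ 2 * C / ρ * Δ := by
      rw [div_mul_eq_mul_div, mul_div_assoc]
      have : C * (Δ / ρ) ≤ 2 * (C * (Δ / ρ)) := by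
        have : 0 ≤ C * (Δ / ρ) := by positivity
        linarith
      calc C * (Δ / ρ) ≤ 2 * (C * (Δ / ρ)) := this
        _ = 2 * C * (Δ / ρ) := by ring
    nlinarith [hLδ.le, h1.trans h2]
  have e2 : (n : ℝ) * (Δ * (L / (1 - δ))) ≤
      L / (1 - δ) * ((1 + L / (1 - δ)) * r) * Δ := by
    have hA : (1 : ℝ) ≤ 1 + L / (1 - δ) := by linarith
    have h1 : (n : ℝ) * Δ ≤ r * Δ := mul_le_mul_of_nonneg_right hnr hΔ0.le
    nlinarith [mul_nonneg hr0 hΔ0.le, mul_le_mul_of_nonneg_left h1 hLδ.le,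
      mul_le_mul_of_nonneg_right hA (mul_nonneg hLδ.le (mul_nonneg hr0 hΔ0.le))]
  calc πQ (fun _ => (1:ℝ)) * |1 - π φ| + C * ρ ^ n * (L / (1 - δ)) +
        (n : ℝ) * (Δ * (L / (1 - δ)))
      ≤ πQ (fun _ => (1:ℝ)) * |1 - π φ| + L / (1 - δ) * (2 * C / ρ) * Δ +
        L / (1 - δ) * ((1 + L / (1 - δ)) * r) * Δ := by linarith
    _ = πQ (fun _ => (1:ℝ)) * |1 - π φ| +
        L / (1 - δ) * (2 * C / ρ + (1 + L / (1 - δ)) * r / 1) * Δ := by ring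
    _ = _ := by rw [div_one]
end

section
/- Let P be a Markov kernel satisfying the drift condition PV ≤ δV + L·1_S for a set S and δ ∈ (0,1), L > 0, and the minorization condition P(x, A) ≥ ν(1_A)·1_S(x) for all x ∈ X, A ∈ 𝒳, where ν is a positive measure. Then ν(V) < ∞, and the nonnegative operator R := P − T, where Tf := ν(f)·1_S, has spectral radius r(R) on B_1 satisfying r(R) ≤ (δ·ν(1_X) + τ)/(ν(1_X) + τ) < 1, where τ := max(0, L − ν(V)). Consequently P is quasi-compact on B_1 with essential spectral radius r_ess(P) ≤ (δ·ν(1_X) + τ)/(ν(1_X) + τ). -/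
open Filter
open Topology
open scoped ENNReal

/-- The essential spectral radius of a bounded operator `T`:
`r_ess(T) = lim_n (inf{‖T^n − K‖ : K compact})^{1/n}` (taken as a `limsup`). -/
noncomputable def essRadius {E : Type*} [NormedAddCommGroup E] [NormedSpace ℝ E]
    (T : E →L[ℝ] E) : ℝ :=
  Filter.limsup
    (fun n : ℕ =>
      (sInf {r : ℝ | ∃ K : E →L[ℝ] E, IsCompactOperator K ∧ ‖T ^ n - K‖ = r}) ^ ((n : ℝ)⁻¹))
    Filter.atTop

/-- The spectral radius of a bounded operator, via Gelfand's formula (as a `limsup`). -/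
noncomputable def specRadius {E : Type*} [NormedAddCommGroup E] [NormedSpace ℝ E]
    (T : E →L[ℝ] E) : ℝ :=
  Filter.limsup (fun n : ℕ => ‖T ^ n‖ ^ ((n : ℝ)⁻¹)) Filter.atTop

lemma limsup_rpow_le_aux {f : ℕ → ℝ} {C β : ℝ} (hC : 0 < C) (hβ : 0 < β)
    (h0 : ∀ n, 0 ≤ f n) (h : ∀ n, f n ≤ C * β ^ n) :
    Filter.limsup (fun n : ℕ => (f n) ^ ((n : ℝ)⁻¹)) Filter.atTop ≤ β := by
  set g : ℕ → ℝ := fun n => C ^ ((n : ℝ)⁻¹) * β with hg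
  have htend : Tendsto g atTop (𝓝 β) := by
    have h1 : Tendsto (fun n : ℕ => C ^ ((n : ℝ)⁻¹)) atTop (𝓝 1) := by
      have : Tendsto (fun n : ℕ => Real.exp (Real.log C * (n : ℝ)⁻¹)) atTop (𝓝 1) := by
        have := (tendsto_const_nhds.mul tendsto_inv_atTop_nhds_zero_nat :
          Tendsto (fun n : ℕ => Real.log C * (n : ℝ)⁻¹) atTop (𝓝 (Real.log C * 0)))
        rw [mul_zero] at this
        simpa [Function.comp_def] using (Real.continuous_exp.tendsto 0).comp this
      refine this.congr (fun n => ?_)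
      rw [Real.rpow_def_of_pos hC]
    simpa using h1.mul_const β
  have hle : ∀ᶠ n in atTop, (f n) ^ ((n : ℝ)⁻¹) ≤ g n := by
    filter_upwards [eventually_ge_atTop 1] with n hn
    have hn0 : (n : ℝ) ≠ 0 := by positivity
    have h2 : (f n) ^ ((n : ℝ)⁻¹) ≤ (C * β ^ n) ^ ((n : ℝ)⁻¹) :=
      Real.rpow_le_rpow (h0 n) (h n) (by positivity)
    refine h2.trans_eq ?_
    rw [Real.mul_rpow hC.le (by positivity), hg]
    congr 1
    rw [← Real.rpow_natCast β n, ← Real.rpow_mul hβ.le, mul_inv_cancel₀ hn0, Real.rpow_one]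
  calc limsup (fun n : ℕ => (f n) ^ ((n : ℝ)⁻¹)) atTop ≤ limsup g atTop := by
        refine limsup_le_limsup hle ?_ ?_
        · exact isCoboundedUnder_le_of_le atTop (fun n => Real.rpow_nonneg (h0 n) _)
        · exact htend.isBoundedUnder_le
    _ = β := htend.limsup_eq


/- STATEMENT 6: If a Markov kernel `P` satisfies the drift condition `P V ≤ δ V + L·1_S` and
the minorization condition `P(x,·) ≥ ν(·)·1_S(x)`, then the nonnegative operator
`R := P − ν(·)1_S` has spectral radius on `B₁` at most `(δ ν(1) + τ)/(ν(1) + τ) < 1`, where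
`τ = max(0, L − ν(V))`; consequently `P` is quasi-compact on `B₁` with
`r_ess(P) ≤ (δ ν(1) + τ)/(ν(1) + τ)`.  The space `B₁` is represented isometrically as
`lp ∞` via `f ↦ f/V`; `TP` and `TR` are the operators on this representation corresponding
to `P` and `R`. -/
set_option maxHeartbeats 1000000 in
set_option synthInstance.maxHeartbeats 400000 in
theorem drift_minorization_ess_radius
    (X : Type*) [MeasurableSpace X]
    (V : X → ℝ) (hV : ∀ x, 1 ≤ V x)
    (P : Module.End ℝ (X → ℝ))
    (hpos : ∀ f : X → ℝ, (∀ x, 0 ≤ f x) → ∀ x, 0 ≤ P f x)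
    (hmarkov : P (fun _ => (1 : ℝ)) = fun _ => (1 : ℝ))
    (S : Set X)
    (δ L : ℝ) (hδ0 : 0 < δ) (hδ1 : δ < 1) (hL : 0 < L)
    (hdrift : ∀ x, P V x ≤ δ * V x + L * S.indicator (fun _ => (1 : ℝ)) x)
    -- ν : a positive measure, modelled as a positive linear functional with ν(1) > 0
    (ν : (X → ℝ) →ₗ[ℝ] ℝ)
    (hνpos : ∀ f : X → ℝ, (∀ x, 0 ≤ f x) → 0 ≤ ν f)
    (hν1 : 0 < ν (fun _ => (1 : ℝ)))
    (hminor : ∀ f : X → ℝ, (∀ x, 0 ≤ f x) →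
      ∀ x, ν f * S.indicator (fun _ => (1 : ℝ)) x ≤ P f x)
    -- TP represents P on B₁ (identified with lp ∞ via f ↦ f/V)
    (TP : lp (fun _ : X => ℝ) ∞ →L[ℝ] lp (fun _ : X => ℝ) ∞)
    (hTP : ∀ g : lp (fun _ : X => ℝ) ∞, ∀ x,
      TP g x = P (fun y => g y * V y) x / V x)
    -- TR represents R = P − ν(·)1_S on B₁
    (TR : lp (fun _ : X => ℝ) ∞ →L[ℝ] lp (fun _ : X => ℝ) ∞)
    (hTR : ∀ g : lp (fun _ : X => ℝ) ∞, ∀ x,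
      TR g x = (P (fun y => g y * V y) x
        - ν (fun y => g y * V y) * S.indicator (fun _ => (1 : ℝ)) x) / V x) :
    specRadius TR ≤ (δ * ν (fun _ => (1 : ℝ)) + max 0 (L - ν V)) /
        (ν (fun _ => (1 : ℝ)) + max 0 (L - ν V)) ∧
    (δ * ν (fun _ => (1 : ℝ)) + max 0 (L - ν V)) /
        (ν (fun _ => (1 : ℝ)) + max 0 (L - ν V)) < 1 ∧
    essRadius TP ≤ (δ * ν (fun _ => (1 : ℝ)) + max 0 (L - ν V)) /
        (ν (fun _ => (1 : ℝ)) + max 0 (L - ν V)) := by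
  have hV0 : ∀ x, 0 < V x := fun x => lt_of_lt_of_le one_pos (hV x)
  set ν1 : ℝ := ν (fun _ => (1 : ℝ)) with hν1def
  set τ : ℝ := max 0 (L - ν V) with hτdef
  set β : ℝ := (δ * ν1 + τ) / (ν1 + τ) with hβdef
  have hτ0 : 0 ≤ τ := le_max_left _ _
  have hden : 0 < ν1 + τ := by linarith
  have hβpos : 0 < β := by
    apply div_pos _ hden; nlinarith
  have hβ1 : β < 1 := by
    rw [hβdef, div_lt_one hden]; nlinarith
  set a : ℝ := τ / ν1 with hadef
  have ha0 : 0 ≤ a := div_nonneg hτ0 hν1.le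
  have haν1 : a * ν1 = τ := div_mul_cancel₀ _ hν1.ne'
  -- key scalar inequality
  have key : ∀ v : ℝ, 1 ≤ v → δ * v + a ≤ β * (v + a) := by
    intro v hv
    rw [hβdef, div_mul_eq_mul_div, le_div_iff₀ hden]
    nlinarith [mul_nonneg (mul_nonneg (sub_nonneg.2 hδ1.le) hτ0) (sub_nonneg.2 hv)]
  -- the operator R
  set Tν : Module.End ℝ (X → ℝ) :=
    { toFun := fun f => fun x => ν f * S.indicator (fun _ => (1 : ℝ)) x
      map_add' := by intro f g; funext x; simp [add_mul]
      map_smul' := by intro c f; funext x; simp [mul_assoc] } with hTνdef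
  set R : Module.End ℝ (X → ℝ) := P - Tν with hRdef
  have hRapp : ∀ (f : X → ℝ) (x : X),
      R f x = P f x - ν f * S.indicator (fun _ => (1 : ℝ)) x := by
    intro f x
    simp [hRdef, hTνdef, LinearMap.sub_apply]
  have hRpos : ∀ f : X → ℝ, (∀ x, 0 ≤ f x) → ∀ x, 0 ≤ R f x := by
    intro f hf x
    rw [hRapp]
    exact sub_nonneg.2 (hminor f hf x)
  have hRnpos : ∀ n, ∀ f : X → ℝ, (∀ x, 0 ≤ f x) → ∀ x, 0 ≤ (R ^ n) f x := by
    intro n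
    induction n with
    | zero => intro f hf x; simpa using hf x
    | succ n ih =>
      intro f hf x
      rw [pow_succ, Module.End.mul_apply]
      exact ih _ (hRpos f hf) x
  have hRnmono : ∀ n, ∀ f g : X → ℝ, (∀ x, f x ≤ g x) →
      ∀ x, (R ^ n) f x ≤ (R ^ n) g x := by
    intro n f g hfg x
    have := hRnpos n (g - f) (fun y => sub_nonneg.2 (hfg y)) x
    rw [map_sub] at this
    simpa [sub_nonneg] using this
  -- the function U
  set U : X → ℝ := V + a • (fun _ => (1 : ℝ)) with hUdef
  have hUapp : ∀ x, U x = V x + a := by intro x; simp [hUdef]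
  have hRU : ∀ x, R U x ≤ β * U x := by
    intro x
    have hind0 : 0 ≤ S.indicator (fun _ => (1 : ℝ)) x :=
      Set.indicator_nonneg (fun _ _ => zero_le_one) x
    have hLτ : L - ν V ≤ τ := le_max_right _ _
    have hPU : P U x = P V x + a := by
      rw [hUdef, map_add, map_smul, hmarkov]
      simp
    have hνU : ν U = ν V + a * ν1 := by
      rw [hUdef, map_add, map_smul]
      simp [hν1def]
    have h1 : R U x ≤ δ * V x + a := by
      rw [hRapp, hPU, hνU, haν1]
      have := hdrift x
      nlinarith [mul_le_mul_of_nonneg_right (show L ≤ ν V + τ by linarith) hind0]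
    calc R U x ≤ δ * V x + a := h1
      _ ≤ β * (V x + a) := key (V x) (hV x)
      _ = β * U x := by rw [hUapp]
  have hRnU : ∀ n x, (R ^ n) U x ≤ β ^ n * U x := by
    intro n
    induction n with
    | zero => intro x; simp
    | succ n ih =>
      intro x
      rw [pow_succ, Module.End.mul_apply]
      have h1 : ∀ y, R U y ≤ (β • U) y := by
        intro y; simpa using hRU y
      calc (R ^ n) (R U) x ≤ (R ^ n) (β • U) x := hRnmono n _ _ h1 x
        _ = β * (R ^ n) U x := by rw [map_smul]; simp
        _ ≤ β * (β ^ n * U x) := by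
            exact mul_le_mul_of_nonneg_left (ih x) hβpos.le
        _ = β ^ (n + 1) * U x := by ring
  have hU0 : ∀ x, 0 ≤ U x := by intro x; rw [hUapp]; nlinarith [hV x]
  have hUle : ∀ x, U x ≤ (1 + a) * V x := by
    intro x; rw [hUapp]; nlinarith [hV x]
  -- correspondence between TR^n and R^n
  have hTRn : ∀ n, ∀ g : lp (fun _ : X => ℝ) ∞, ∀ x,
      ((TR ^ n) g : ∀ _ : X, ℝ) x = (R ^ n) (fun y => g y * V y) x / V x := by
    intro n
    induction n with
    | zero =>
      intro g x
      simp [mul_div_assoc, div_self (hV0 x).ne', mul_one]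
    | succ n ih =>
      intro g x
      rw [pow_succ, ContinuousLinearMap.mul_apply]
      rw [ih (TR g) x]
      congr 2
      have : (fun y => (TR g : ∀ _ : X, ℝ) y * V y) = R (fun y => g y * V y) := by
        funext y
        rw [hTR g y, hRapp, div_mul_cancel₀ _ (hV0 y).ne']
      rw [this, pow_succ, Module.End.mul_apply]
  -- norm bound for TR^n
  have hnormTRn : ∀ n, ‖TR ^ n‖ ≤ (1 + a) * β ^ n := by
    intro n
    apply ContinuousLinearMap.opNorm_le_bound _ (by positivity)
    intro g
    apply lp.norm_le_of_forall_le (by positivity)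
    intro x
    set f : X → ℝ := fun y => g y * V y with hfdef
    have hgb : ∀ y, |g y| ≤ ‖g‖ := by
      intro y
      simpa [Real.norm_eq_abs] using lp.norm_apply_le_norm ENNReal.top_ne_zero g y
    have hfu : ∀ y, f y ≤ (‖g‖ • U) y := by
      intro y
      have : f y ≤ ‖g‖ * V y := by
        have := (abs_le.1 (hgb y)).2
        calc f y ≤ |g y| * V y :=
              mul_le_mul_of_nonneg_right (le_abs_self _) (hV0 y).le
          _ ≤ ‖g‖ * V y := mul_le_mul_of_nonneg_right (hgb y) (hV0 y).le
      calc f y ≤ ‖g‖ * V y := this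
        _ ≤ ‖g‖ * U y := by
            refine mul_le_mul_of_nonneg_left ?_ (norm_nonneg g)
            rw [hUapp]; linarith
        _ = (‖g‖ • U) y := by simp
    have hfl : ∀ y, -((‖g‖ • U) y) ≤ f y := by
      intro y
      have h0 : -(|(g : ∀ _ : X, ℝ) y|) * V y ≤ f y := by
        simpa [hfdef] using
          mul_le_mul_of_nonneg_right (neg_abs_le ((g : ∀ _ : X, ℝ) y)) (hV0 y).le
      have h1 : |(g : ∀ _ : X, ℝ) y| * V y ≤ ‖g‖ * V y :=
        mul_le_mul_of_nonneg_right (hgb y) (hV0 y).le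
      have h2 : ‖g‖ * V y ≤ ‖g‖ * U y := by
        refine mul_le_mul_of_nonneg_left ?_ (norm_nonneg g)
        rw [hUapp]; linarith
      have h3 : (‖g‖ • U) y = ‖g‖ * U y := by simp
      rw [h3]
      nlinarith [h0, h1, h2]
    have hub : (R ^ n) f x ≤ ‖g‖ * (β ^ n * U x) := by
      calc (R ^ n) f x ≤ (R ^ n) (‖g‖ • U) x := hRnmono n _ _ hfu x
        _ = ‖g‖ * (R ^ n) U x := by rw [map_smul]; simp
        _ ≤ ‖g‖ * (β ^ n * U x) :=
            mul_le_mul_of_nonneg_left (hRnU n x) (norm_nonneg g)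
    have hlb : -(‖g‖ * (β ^ n * U x)) ≤ (R ^ n) f x := by
      have : (R ^ n) (-f) x ≤ ‖g‖ * (β ^ n * U x) := by
        calc (R ^ n) (-f) x ≤ (R ^ n) (‖g‖ • U) x := by
              refine hRnmono n _ _ (fun y => ?_) x
              have := hfl y
              simp only [Pi.neg_apply]
              linarith
          _ = ‖g‖ * (R ^ n) U x := by rw [map_smul]; simp
          _ ≤ ‖g‖ * (β ^ n * U x) :=
              mul_le_mul_of_nonneg_left (hRnU n x) (norm_nonneg g)
      rw [map_neg] at this
      simp only [Pi.neg_apply] at this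
      linarith
    have habs : |(R ^ n) f x| ≤ ‖g‖ * (β ^ n * U x) := abs_le.2 ⟨hlb, hub⟩
    have hfin : |(R ^ n) f x| ≤ (1 + a) * β ^ n * ‖g‖ * V x := by
      calc |(R ^ n) f x| ≤ ‖g‖ * (β ^ n * U x) := habs
        _ ≤ ‖g‖ * (β ^ n * ((1 + a) * V x)) := by
            refine mul_le_mul_of_nonneg_left ?_ (norm_nonneg g)
            exact mul_le_mul_of_nonneg_left (hUle x) (by positivity)
        _ = (1 + a) * β ^ n * ‖g‖ * V x := by ring
    rw [hTRn n g x, Real.norm_eq_abs, abs_div, abs_of_pos (hV0 x),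
      div_le_iff₀ (hV0 x)]
    calc |(R ^ n) f x| ≤ (1 + a) * β ^ n * ‖g‖ * V x := hfin
      _ = (1 + a) * β ^ n * ‖g‖ * V x := rfl
  -- spectral radius bound
  have hspec : specRadius TR ≤ β := by
    rw [specRadius]
    exact limsup_rpow_le_aux (by positivity) hβpos (fun n => norm_nonneg _) hnormTRn
  -- compactness of TP - TR
  have hu_mem : Memℓp (fun x : X => S.indicator (fun _ => (1 : ℝ)) x / V x) ∞ := by
    apply memℓp_infty
    refine ⟨1, ?_⟩
    rintro r ⟨x, rfl⟩
    show ‖S.indicator (fun _ => (1 : ℝ)) x / V x‖ ≤ 1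
    have hind0 : 0 ≤ S.indicator (fun _ => (1 : ℝ)) x :=
      Set.indicator_nonneg (fun _ _ => zero_le_one) x
    have hind1 : S.indicator (fun _ => (1 : ℝ)) x ≤ 1 := by
      classical
      rw [Set.indicator_apply]
      split <;> norm_num
    rw [Real.norm_eq_abs, abs_div, abs_of_nonneg hind0, abs_of_pos (hV0 x)]
    rw [div_le_one (hV0 x)]
    linarith [hV x]
  set u : lp (fun _ : X => ℝ) ∞ := ⟨_, hu_mem⟩ with hudef
  have hKapp : ∀ g : lp (fun _ : X => ℝ) ∞,
      (TP - TR) g = ν (fun y => g y * V y) • u := by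
    intro g
    apply lp.ext
    funext x
    have h1 : ((TP - TR) g : ∀ _ : X, ℝ) x = TP g x - TR g x := by
      rw [ContinuousLinearMap.sub_apply, lp.coeFn_sub]
      simp
    rw [h1, hTP g x, hTR g x, lp.coeFn_smul]
    simp only [Pi.smul_apply, smul_eq_mul]
    rw [div_sub_div_same, sub_sub_cancel, mul_div_assoc]
  have hνmono : ∀ f g : X → ℝ, (∀ x, f x ≤ g x) → ν f ≤ ν g := by
    intro f g hfg
    have := hνpos (g - f) (fun x => sub_nonneg.2 (hfg x))
    rw [map_sub] at this
    linarith
  have hcb : ∀ g : lp (fun _ : X => ℝ) ∞, |ν (fun y => g y * V y)| ≤ ‖g‖ * ν V := by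
    intro g
    have hgb : ∀ y, |g y| ≤ ‖g‖ := by
      intro y
      simpa [Real.norm_eq_abs] using lp.norm_apply_le_norm ENNReal.top_ne_zero g y
    have hup : ν (fun y => g y * V y) ≤ ‖g‖ * ν V := by
      have := hνmono (fun y => g y * V y) (‖g‖ • V) (fun y => by
        simp only [Pi.smul_apply, smul_eq_mul]
        calc g y * V y ≤ |g y| * V y :=
              mul_le_mul_of_nonneg_right (le_abs_self _) (hV0 y).le
          _ ≤ ‖g‖ * V y := mul_le_mul_of_nonneg_right (hgb y) (hV0 y).le)
      rwa [map_smul, smul_eq_mul] at this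
    have hlo : -(‖g‖ * ν V) ≤ ν (fun y => g y * V y) := by
      have := hνmono (-(‖g‖ • V)) (fun y => g y * V y) (fun y => by
        simp only [Pi.neg_apply, Pi.smul_apply, smul_eq_mul]
        have h1 : -(‖g‖ * V y) ≤ -(|g y| * V y) := by
          have := mul_le_mul_of_nonneg_right (hgb y) (hV0 y).le
          linarith
        have h2 : -(|g y| * V y) ≤ g y * V y := by
          have := mul_le_mul_of_nonneg_right (neg_abs_le (g y)) (hV0 y).le
          linarith [this]
        linarith)
      rw [map_neg, map_smul, smul_eq_mul] at this
      linarith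
    exact abs_le.2 ⟨hlo, hup⟩
  have hνV0 : 0 ≤ ν V := hνpos V (fun x => (hV0 x).le)
  have hKcompact : IsCompactOperator ⇑(TP - TR) := by
    refine ⟨(fun t : ℝ => t • u) '' Set.Icc (-(ν V)) (ν V),
      isCompact_Icc.image (continuous_id.smul continuous_const), ?_⟩
    refine Filter.mem_of_superset (Metric.closedBall_mem_nhds 0 one_pos) ?_
    intro g hg
    rw [Metric.mem_closedBall, dist_zero_right] at hg
    refine ⟨ν (fun y => g y * V y), ?_, (hKapp g).symm⟩
    have := hcb g
    have h1 : ‖g‖ * ν V ≤ ν V := by nlinarith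
    constructor
    · linarith [(abs_le.1 this).1]
    · linarith [(abs_le.1 this).2]
  -- compactness of TP^n - TR^n
  have hCn : ∀ n, IsCompactOperator ⇑(TP ^ n - TR ^ n) := by
    intro n
    induction n with
    | zero =>
      simp only [pow_zero, sub_self]
      simpa using (isCompactOperator_zero :
        IsCompactOperator (fun _ : lp (fun _ : X => ℝ) ∞ => (0 : lp (fun _ : X => ℝ) ∞)))
    | succ n ih =>
      have heq : TP ^ (n + 1) - TR ^ (n + 1)
          = TP * (TP ^ n - TR ^ n) + (TP - TR) * TR ^ n := by
        rw [pow_succ', pow_succ', mul_sub, sub_mul]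
        abel
      rw [heq]
      have h1 : IsCompactOperator ⇑(TP * (TP ^ n - TR ^ n)) := by
        have hc : ⇑(TP * (TP ^ n - TR ^ n)) = ⇑TP ∘ ⇑(TP ^ n - TR ^ n) := rfl
        rw [hc]
        exact ih.clm_comp TP
      have h2 : IsCompactOperator ⇑((TP - TR) * TR ^ n) := by
        have hc : ⇑((TP - TR) * TR ^ n) = ⇑(TP - TR) ∘ ⇑(TR ^ n) := rfl
        rw [hc]
        exact hKcompact.comp_clm (TR ^ n)
      rw [ContinuousLinearMap.coe_add']
      exact h1.add h2
  -- essential radius bound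
  have hess : essRadius TP ≤ β := by
    rw [essRadius]
    apply limsup_rpow_le_aux (show (0:ℝ) < 1 + a by positivity) hβpos
    · intro n
      apply Real.sInf_nonneg
      rintro r ⟨K, _, rfl⟩
      exact norm_nonneg _
    · intro n
      refine le_trans (csInf_le ⟨0, ?_⟩ ?_) (hnormTRn n)
      · rintro r ⟨K, _, rfl⟩
        exact norm_nonneg _
      · exact ⟨TP ^ n - TR ^ n, hCn n, by rw [sub_sub_cancel]⟩
  exact ⟨hspec, hβ1, hess⟩
end

section
/- If the Markov kernel P satisfies PV ≤ δV + L·1_A for an atom A (i.e., P(a,·) = P(a',·) for all a, a' ∈ A), then r_ess(P) ≤ δ. Indeed, with ν := P(a_0, ·) for any a_0 ∈ A and L := sup_{x∈A}(PV)(x), one has L = ν(V), so τ = 0 in the bound (δ·ν(1_X) + τ)/(ν(1_X) + τ). -/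
open Filter Topology
open scoped ENNReal
set_option maxHeartbeats 1000000

theorem atom_ess_radius_le_delta
    (X : Type*) [MeasurableSpace X]
    (V : X → ℝ) (hV : ∀ x, 1 ≤ V x)
    (P : Module.End ℝ (X → ℝ))
    (hpos : ∀ f : X → ℝ, (∀ x, 0 ≤ f x) → ∀ x, 0 ≤ P f x)
    (hmarkov : P (fun _ => (1 : ℝ)) = fun _ => (1 : ℝ))
    (A : Set X) (hA : A.Nonempty)
    (hatom : ∀ a ∈ A, ∀ a' ∈ A, ∀ f : X → ℝ, P f a = P f a')
    (δ L : ℝ) (hδ0 : 0 < δ) (hδ1 : δ < 1) (hL : 0 < L)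
    (hdrift : ∀ x, P V x ≤ δ * V x + L * A.indicator (fun _ => (1 : ℝ)) x)
    (TP : lp (fun _ : X => ℝ) ∞ →L[ℝ] lp (fun _ : X => ℝ) ∞)
    (hTP : ∀ g : lp (fun _ : X => ℝ) ∞, ∀ x,
      TP g x = P (fun y => g y * V y) x / V x) :
    essRadius TP ≤ δ ∧ ∀ a₀ ∈ A, ∀ a₁ ∈ A, P V a₀ = P V a₁ := by
  refine ⟨?_, fun a₀ h0 a₁ h1 => hatom a₀ h0 a₁ h1 V⟩
  obtain ⟨a₀, ha₀⟩ := hA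
  have hVpos : ∀ x, 0 < V x := fun x => lt_of_lt_of_le one_pos (hV x)
  set E := lp (fun _ : X => ℝ) ∞ with hE
  -- key estimate: |P(gV)(x)| ≤ ‖g‖ * PV(x)
  have hgle : ∀ (g : E) (y : X), |g y| ≤ ‖g‖ := fun g y =>
    lp.norm_apply_le_norm ENNReal.top_ne_zero g y
  have hkey : ∀ (g : E) (x : X), |P (fun y => g y * V y) x| ≤ ‖g‖ * P V x := by
    intro g x
    have hup : P (fun y => ‖g‖ * V y - g y * V y) x = ‖g‖ * P V x - P (fun y => g y * V y) x := by
      have h1 : (fun y => ‖g‖ * V y - g y * V y) = ‖g‖ • V - fun y => g y * V y := rfl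
      rw [h1, map_sub, map_smul]
      rfl
    have hlo : P (fun y => ‖g‖ * V y + g y * V y) x = ‖g‖ * P V x + P (fun y => g y * V y) x := by
      have h1 : (fun y => ‖g‖ * V y + g y * V y) = ‖g‖ • V + fun y => g y * V y := rfl
      rw [h1, map_add, map_smul]
      rfl
    rw [abs_le]
    constructor
    · have := hpos (fun y => ‖g‖ * V y + g y * V y)
        (fun y => by dsimp only; nlinarith [hgle g y, abs_nonneg (g y), neg_abs_le (g y), hVpos y]) x
      rw [hlo] at this; linarith
    · have := hpos (fun y => ‖g‖ * V y - g y * V y)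
        (fun y => by dsimp only; nlinarith [hgle g y, le_abs_self (g y), hVpos y]) x
      rw [hup] at this; linarith
  have hPV0 : ∀ x, 0 ≤ P V x := hpos V (fun x => (hVpos x).le)
  -- the lp ∞ element χ = 1_A / V
  have hχmem : Memℓp (A.indicator fun x => (V x)⁻¹) (∞ : ℝ≥0∞) := by
    apply memℓp_infty
    refine ⟨1, ?_⟩
    rintro r ⟨x, rfl⟩
    by_cases hx : x ∈ A
    · simp only [Set.indicator_of_mem hx, Real.norm_eq_abs,
        abs_of_nonneg (inv_nonneg.2 (hVpos x).le)]
      exact inv_le_one_of_one_le₀ (hV x)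
    · simp [Set.indicator_of_notMem hx]
  set χ : E := ⟨A.indicator fun x => (V x)⁻¹, hχmem⟩ with hχ
  have hχval : ∀ x, χ x = A.indicator (fun x => (V x)⁻¹) x := fun x => rfl
  -- the functional φ g = P(gV)(a₀)
  set φlin : E →ₗ[ℝ] ℝ :=
    { toFun := fun g => P (fun y => g y * V y) a₀
      map_add' := by
        intro g h
        dsimp only
        have h1 : (fun y => (g + h) y * V y) =
            (fun y => g y * V y) + fun y => h y * V y := by
          funext y
          have : (g + h) y = g y + h y := by rw [lp.coeFn_add]; rfl
          simp [this, add_mul]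
        rw [h1, map_add]; rfl
      map_smul' := by
        intro c g
        dsimp only
        have h1 : (fun y => (c • g) y * V y) = c • fun y => g y * V y := by
          funext y
          have : (c • g) y = c * g y := by rw [lp.coeFn_smul]; rfl
          simp [this, mul_assoc]
        rw [h1, map_smul]; rfl } with hφlin
  set φ : E →L[ℝ] ℝ := φlin.mkContinuous (P V a₀)
    (fun g => by
      rw [Real.norm_eq_abs, mul_comm (P V a₀)]
      exact hkey g a₀) with hφ
  have hφval : ∀ g : E, φ g = P (fun y => g y * V y) a₀ := fun g => rfl
  -- R rank one, N = TP - R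
  set R : E →L[ℝ] E := φ.smulRight χ with hR
  set N : E →L[ℝ] E := TP - R with hNdef
  have hNval : ∀ (g : E) (x : X),
      N g x = P (fun y => g y * V y) x / V x - P (fun y => g y * V y) a₀ *
        A.indicator (fun x => (V x)⁻¹) x := by
    intro g x
    have h1 : N g = TP g - R g := rfl
    have h2 : (N g : ∀ _ : X, ℝ) x = TP g x - R g x := by
      rw [h1, lp.coeFn_sub]; rfl
    have h3 : R g = φ g • χ := rfl
    have h4 : (R g : ∀ _ : X, ℝ) x = φ g * χ x := by
      rw [h3, lp.coeFn_smul]; rfl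
    rw [h2, h4, hTP, hφval, hχval]
  -- pointwise bound on N
  have hNle : ∀ (g : E) (x : X), ‖N g x‖ ≤ δ * ‖g‖ := by
    intro g x
    rw [Real.norm_eq_abs, hNval]
    by_cases hx : x ∈ A
    · rw [Set.indicator_of_mem hx, hatom a₀ ha₀ x hx (fun y => g y * V y)]
      rw [div_eq_mul_inv, sub_self, abs_zero]
      positivity
    · rw [Set.indicator_of_notMem hx, mul_zero, sub_zero, abs_div,
        abs_of_pos (hVpos x)]
      have hd : P V x ≤ δ * V x := by
        have := hdrift x
        rw [Set.indicator_of_notMem hx, mul_zero, add_zero] at this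
        exact this
      rw [div_le_iff₀ (hVpos x)]
      calc |P (fun y => g y * V y) x| ≤ ‖g‖ * P V x := hkey g x
        _ ≤ ‖g‖ * (δ * V x) := by
            exact mul_le_mul_of_nonneg_left hd (norm_nonneg g)
        _ = δ * ‖g‖ * V x := by ring
  have hNnorm : ‖N‖ ≤ δ := by
    apply ContinuousLinearMap.opNorm_le_bound N hδ0.le
    intro g
    exact lp.norm_le_of_forall_le (by positivity) (hNle g)
  -- R is compact
  have hRcomp : IsCompactOperator (⇑R) := by
    refine ⟨(fun t : ℝ => t • χ) '' Set.Icc (-1) 1,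
      (isCompact_Icc).image (continuous_id.smul continuous_const), ?_⟩
    have h1 : Set.Icc (-1 : ℝ) 1 ∈ 𝓝 (0 : ℝ) := Icc_mem_nhds (by norm_num) (by norm_num)
    have h2 : φ ⁻¹' Set.Icc (-1) 1 ∈ (𝓝 0 : Filter E) := by
      have := φ.continuous.tendsto 0
      rw [map_zero] at this
      exact this h1
    refine Filter.mem_of_superset h2 ?_
    intro g hg
    exact ⟨φ g, hg, rfl⟩
  -- TP^n - N^n is compact
  have hcomp : ∀ n : ℕ, IsCompactOperator ⇑(TP ^ n - N ^ n) := by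
    intro n
    induction n with
    | zero =>
        rw [pow_zero, pow_zero, sub_self]
        refine ⟨{0}, isCompact_singleton, Filter.mem_of_superset Filter.univ_mem ?_⟩
        intro x _
        simp
    | succ n ih =>
        have key : TP ^ (n + 1) - N ^ (n + 1) = TP * (TP ^ n - N ^ n) + R * N ^ n := by
          have hRe : R = TP - N := (sub_sub_cancel TP R).symm
          have h2 : R * N ^ n = TP * N ^ n - N * N ^ n := by rw [hRe, sub_mul]
          rw [pow_succ', pow_succ', mul_sub, h2]
          abel
        rw [key]
        have h1 : ⇑(TP * (TP ^ n - N ^ n) + R * N ^ n) =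
            (⇑TP ∘ ⇑(TP ^ n - N ^ n)) + (⇑R ∘ ⇑(N ^ n)) := by
          funext g
          simp [ContinuousLinearMap.add_apply, ContinuousLinearMap.mul_apply, Function.comp]
        rw [h1]
        exact (ih.clm_comp TP).add (hRcomp.comp_clm (N ^ n))
  -- the sInf bounds
  set f : ℕ → ℝ := fun n =>
    (sInf {r : ℝ | ∃ K : E →L[ℝ] E, IsCompactOperator K ∧ ‖TP ^ n - K‖ = r}) ^ ((n : ℝ)⁻¹)
    with hf
  have hbdd : ∀ n : ℕ, BddBelow {r : ℝ | ∃ K : E →L[ℝ] E, IsCompactOperator K ∧ ‖TP ^ n - K‖ = r} :=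
    fun n => ⟨0, by rintro r ⟨K, -, rfl⟩; exact norm_nonneg _⟩
  have hinf0 : ∀ n : ℕ,
      0 ≤ sInf {r : ℝ | ∃ K : E →L[ℝ] E, IsCompactOperator K ∧ ‖TP ^ n - K‖ = r} := by
    intro n
    apply Real.sInf_nonneg
    rintro r ⟨K, -, rfl⟩; exact norm_nonneg _
  have hinfle : ∀ n : ℕ,
      sInf {r : ℝ | ∃ K : E →L[ℝ] E, IsCompactOperator K ∧ ‖TP ^ n - K‖ = r} ≤ δ ^ n := by
    intro n
    have hmem : ‖N ^ n‖ ∈ {r : ℝ | ∃ K : E →L[ℝ] E, IsCompactOperator K ∧ ‖TP ^ n - K‖ = r} :=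
      ⟨TP ^ n - N ^ n, hcomp n, by rw [sub_sub_cancel]⟩
    refine (csInf_le (hbdd n) hmem).trans ?_
    clear hmem
    induction n with
    | zero =>
        rw [pow_zero, pow_zero, ContinuousLinearMap.one_def]
        exact ContinuousLinearMap.norm_id_le
    | succ n ih =>
        calc ‖N ^ (n + 1)‖ = ‖N * N ^ n‖ := by rw [pow_succ']
          _ ≤ ‖N‖ * ‖N ^ n‖ := ContinuousLinearMap.opNorm_comp_le N (N ^ n)
          _ ≤ δ * δ ^ n := by
              exact mul_le_mul hNnorm ih (norm_nonneg _) hδ0.le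
          _ = δ ^ (n + 1) := (pow_succ' δ n).symm
  have hfle : ∀ n : ℕ, 1 ≤ n → f n ≤ δ := by
    intro n hn
    have h1 : f n ≤ (δ ^ n) ^ ((n : ℝ)⁻¹) :=
      Real.rpow_le_rpow (hinf0 n) (hinfle n) (by positivity)
    have h2 : ((δ ^ n : ℝ)) ^ ((n : ℝ)⁻¹) = δ := by
      rw [← Real.rpow_natCast δ n, ← Real.rpow_mul hδ0.le,
        mul_inv_cancel₀ (Nat.cast_ne_zero.mpr (by omega)), Real.rpow_one]
    rw [h2] at h1
    exact h1
  have hf0 : ∀ n : ℕ, 0 ≤ f n := fun n => Real.rpow_nonneg (hinf0 n) _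
  unfold essRadius
  apply Filter.limsup_le_of_le
  · exact isCoboundedUnder_le_of_eventually_le atTop (Eventually.of_forall hf0)
  · filter_upwards [Filter.eventually_ge_atTop 1] with n hn using hfle n hn
end

section
/- Let P be a Markov kernel with PV ≤ δV + L·1_X (δ ∈ (0,1), L > 0) such that P^ℓ : B_0 → B_1 is a compact operator for some ℓ ≥ 1. Then P is power-bounded and quasi-compact on B_1 with essential spectral radius r_ess(P) ≤ δ. -/
open Filter
open scoped ENNReal

set_option maxHeartbeats 1000000 in
set_option synthInstance.maxHeartbeats 200000 in
noncomputable def weakDriftTrunc {X : Type*} (V : X → ℝ) (R : ℝ) :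
    lp (fun _ : X => ℝ) ∞ →L[ℝ] lp (fun _ : X => ℝ) ∞ :=
  have key : ∀ g : lp (fun _ : X => ℝ) ∞, ∀ x : X,
      ‖(if |V x| ≤ R then g x * V x else 0 : ℝ)‖ ≤ max R 0 * ‖g‖ := by
    intro g x
    have hg : |g x| ≤ ‖g‖ := by
      simpa [Real.norm_eq_abs] using lp.norm_apply_le_norm ENNReal.top_ne_zero g x
    have hgn : (0:ℝ) ≤ ‖g‖ := norm_nonneg g
    rw [Real.norm_eq_abs]
    split_ifs with h
    · rw [abs_mul]
      have h1 : |V x| ≤ max R 0 := h.trans (le_max_left _ _)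
      nlinarith [abs_nonneg (g x), abs_nonneg (V x), le_max_right R 0]
    · rw [abs_zero]
      nlinarith [le_max_right R 0]
  LinearMap.mkContinuous
    { toFun := fun g => ⟨fun x => if |V x| ≤ R then g x * V x else 0,
        memℓp_infty ⟨max R 0 * ‖g‖, by rintro r ⟨x, rfl⟩; exact key g x⟩⟩
      map_add' := fun g h => by
        apply lp.ext
        funext x
        show (if |V x| ≤ R then (g x + h x) * V x else 0)
            = (if |V x| ≤ R then g x * V x else 0) + (if |V x| ≤ R then h x * V x else 0)
        split_ifs <;> ring
      map_smul' := fun c g => by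
        apply lp.ext
        funext x
        show (if |V x| ≤ R then c * g x * V x else 0)
            = c * (if |V x| ≤ R then g x * V x else 0)
        split_ifs <;> ring }
    (max R 0)
    (fun g => lp.norm_le_of_forall_le (mul_nonneg (le_max_right _ _) (norm_nonneg _)) (key g))

theorem weakDriftTrunc_apply {X : Type*} (V : X → ℝ) (R : ℝ) (g : lp (fun _ : X => ℝ) ∞) (x : X) :
    weakDriftTrunc V R g x = if |V x| ≤ R then g x * V x else 0 := rfl

/- STATEMENT 8: If the Markov kernel `P` satisfies `P V ≤ δ V + L·1_X` (`δ ∈ (0,1)`, `L > 0`)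
and `P^ℓ : B₀ → B₁` is compact for some `ℓ ≥ 1`, then `P` is power-bounded and quasi-compact
on `B₁` with `r_ess(P) ≤ δ`.  Here `B₀` is the bounded functions (≅ `lp ∞`) and `B₁` is
represented isometrically as `lp ∞` via `f ↦ f/V`; `TP` represents `P` acting on `B₁` and
`S` represents `P^ℓ : B₀ → B₁`. -/
set_option maxHeartbeats 2000000 in
set_option synthInstance.maxHeartbeats 400000 in
theorem weak_drift_compact_ess_radius
    (X : Type*) [MeasurableSpace X]
    (V : X → ℝ) (hV : ∀ x, 1 ≤ V x)
    (P : Module.End ℝ (X → ℝ))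
    (hpos : ∀ f : X → ℝ, (∀ x, 0 ≤ f x) → ∀ x, 0 ≤ P f x)
    (hmarkov : P (fun _ => (1 : ℝ)) = fun _ => (1 : ℝ))
    (δ L : ℝ) (hδ0 : 0 < δ) (hδ1 : δ < 1) (hL : 0 < L)
    (hdrift : ∀ x, P V x ≤ δ * V x + L)
    (ℓ : ℕ) (hℓ : 1 ≤ ℓ)
    -- S represents P^ℓ : B₀ → B₁ and is a compact operator
    (S : lp (fun _ : X => ℝ) ∞ →L[ℝ] lp (fun _ : X => ℝ) ∞)
    (hS : ∀ g : lp (fun _ : X => ℝ) ∞, ∀ x, S g x = (P ^ ℓ) (fun y => g y) x / V x)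
    (hScompact : IsCompactOperator S)
    -- TP represents P acting on B₁
    (TP : lp (fun _ : X => ℝ) ∞ →L[ℝ] lp (fun _ : X => ℝ) ∞)
    (hTP : ∀ g : lp (fun _ : X => ℝ) ∞, ∀ x,
      TP g x = P (fun y => g y * V y) x / V x) :
    (∃ c : ℝ, ∀ n : ℕ, ‖TP ^ n‖ ≤ c) ∧ essRadius TP ≤ δ := by
  classical
  have h1δ : 0 < 1 - δ := by linarith
  set C : ℝ := L / (1 - δ) with hCdef
  have hC0 : 0 < C := div_pos hL h1δ
  have hV0 : ∀ x, 0 < V x := fun x => lt_of_lt_of_le one_pos (hV x)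
  have hVne : ∀ x, V x ≠ 0 := fun x => (hV0 x).ne'
  -- iterated positivity/monotonicity
  have hposn : ∀ n : ℕ, ∀ f : X → ℝ, (∀ x, 0 ≤ f x) → ∀ x, 0 ≤ (P ^ n) f x := by
    intro n
    induction n with
    | zero => intro f hf x; simpa using hf x
    | succ n ih =>
      intro f hf x
      rw [pow_succ, Module.End.mul_apply]
      exact ih (P f) (hpos f hf) x
  have hmonon : ∀ (n : ℕ) (f h : X → ℝ), (∀ x, f x ≤ h x) → ∀ x, (P ^ n) f x ≤ (P ^ n) h x := by
    intro n f h hfh x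
    have h0 : ∀ y, 0 ≤ (h - f) y := fun y => by
      simp only [Pi.sub_apply]; linarith [hfh y]
    have h1 := hposn n (h - f) h0 x
    rw [map_sub] at h1
    simp only [Pi.sub_apply] at h1
    linarith
  have habsn : ∀ (n : ℕ) (f h : X → ℝ), (∀ x, |f x| ≤ h x) → ∀ x, |(P ^ n) f x| ≤ (P ^ n) h x := by
    intro n f h hfh x
    have h1 := hmonon n f h (fun y => (abs_le.1 (hfh y)).2) x
    have h2 := hmonon n (-f) h (fun y => by
      simp only [Pi.neg_apply]; linarith [neg_le_abs (f y), hfh y]) x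
    rw [map_neg] at h2
    simp only [Pi.neg_apply] at h2
    rw [abs_le]
    constructor <;> linarith
  -- linearity helper
  have hPlin : ∀ (a b : ℝ) (f : X → ℝ) (x : X), P (fun y => a * f y + b) x = a * P f x + b := by
    intro a b f x
    have h1 : (fun y => a * f y + b) = a • f + b • (fun _ : X => (1:ℝ)) := by
      funext y
      simp [Pi.add_apply, Pi.smul_apply, smul_eq_mul]
    rw [h1, map_add, map_smul, map_smul, hmarkov]
    simp [Pi.add_apply, Pi.smul_apply, smul_eq_mul]
  -- iterated drift
  have hdrift' : ∀ n : ℕ, ∀ x, (P ^ n) V x ≤ δ ^ n * V x + L * ∑ k ∈ Finset.range n, δ ^ k := by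
    intro n
    induction n with
    | zero => intro x; simp
    | succ n ih =>
      intro x
      have hstep : (P ^ (n + 1)) V x = P ((P ^ n) V) x := by
        rw [pow_succ', Module.End.mul_apply]
      rw [hstep]
      have h1 : ∀ y, (P ^ n) V y ≤ (fun y => δ ^ n * V y + L * ∑ k ∈ Finset.range n, δ ^ k) y :=
        fun y => ih y
      have h2 := hmonon 1 _ _ h1 x
      simp only [pow_one] at h2
      rw [hPlin (δ ^ n) (L * ∑ k ∈ Finset.range n, δ ^ k) V x] at h2
      have h3 : δ ^ n * P V x ≤ δ ^ n * (δ * V x + L) :=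
        mul_le_mul_of_nonneg_left (hdrift x) (pow_nonneg hδ0.le n)
      rw [Finset.sum_range_succ]
      calc P ((P ^ n) V) x ≤ δ ^ n * (δ * V x + L) + L * ∑ k ∈ Finset.range n, δ ^ k := by
            linarith
        _ = δ ^ (n+1) * V x + L * ((∑ k ∈ Finset.range n, δ ^ k) + δ ^ n) := by ring
  have hsum : ∀ n : ℕ, (∑ k ∈ Finset.range n, δ ^ k) ≤ 1 / (1 - δ) := by
    intro n
    rw [geom_sum_eq (ne_of_lt hδ1)]
    have h1 : (δ ^ n - 1) / (δ - 1) = (1 - δ ^ n) / (1 - δ) := by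
      rw [← neg_div_neg_eq]; ring_nf
    rw [h1]
    have h2 : (0:ℝ) ≤ δ ^ n := pow_nonneg hδ0.le n
    rw [div_le_div_iff₀ h1δ h1δ]
    nlinarith
  have hdriftC : ∀ n : ℕ, ∀ x, (P ^ n) V x ≤ δ ^ n * V x + C := by
    intro n x
    have h1 := hdrift' n x
    have h2 : L * ∑ k ∈ Finset.range n, δ ^ k ≤ L * (1 / (1 - δ)) :=
      mul_le_mul_of_nonneg_left (hsum n) hL.le
    have h3 : L * (1 / (1 - δ)) = C := by rw [hCdef]; ring
    linarith
  -- pointwise bound on iterates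
  have hPn_bound : ∀ (n : ℕ) (g : lp (fun _ : X => ℝ) ∞) (y : X),
      |(P ^ n) (fun z => g z * V z) y| ≤ ‖g‖ * (δ ^ n * V y + C) := by
    intro n g y
    have h1 : ∀ z, |(fun z => g z * V z) z| ≤ (‖g‖ • V) z := by
      intro z
      simp only [Pi.smul_apply, smul_eq_mul]
      rw [abs_mul, abs_of_pos (hV0 z)]
      have hgz : |g z| ≤ ‖g‖ := by
        simpa [Real.norm_eq_abs] using lp.norm_apply_le_norm ENNReal.top_ne_zero g z
      exact mul_le_mul_of_nonneg_right hgz (hV0 z).le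
    have h2 := habsn n _ _ h1 y
    rw [map_smul] at h2
    simp only [Pi.smul_apply, smul_eq_mul] at h2
    calc |(P ^ n) (fun z => g z * V z) y| ≤ ‖g‖ * (P ^ n) V y := h2
      _ ≤ ‖g‖ * (δ ^ n * V y + C) :=
        mul_le_mul_of_nonneg_left (hdriftC n y) (norm_nonneg g)
  -- formula for TP^n
  have hTPn : ∀ (n : ℕ) (g : lp (fun _ : X => ℝ) ∞) (x : X),
      (TP ^ n) g x = (P ^ n) (fun y => g y * V y) x / V x := by
    intro n
    induction n with
    | zero =>
      intro g x
      simp only [pow_zero, ContinuousLinearMap.one_apply, Module.End.one_apply]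
      exact (mul_div_cancel_right₀ (g x) (hVne x)).symm
    | succ n ih =>
      intro g x
      have hstep : (TP ^ (n + 1)) g = TP ((TP ^ n) g) := by
        rw [pow_succ', ContinuousLinearMap.mul_apply]
      rw [hstep, hTP ((TP ^ n) g) x]
      have h1 : (fun y => ((TP ^ n) g) y * V y) = (P ^ n) (fun y => g y * V y) := by
        funext y
        rw [ih g y, div_mul_cancel₀ _ (hVne y)]
      rw [h1]
      have h2 : (P ^ (n + 1)) (fun y => g y * V y) = P ((P ^ n) (fun y => g y * V y)) := by
        rw [pow_succ', Module.End.mul_apply]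
      rw [h2]
  -- power boundedness
  have hδn1 : ∀ n : ℕ, δ ^ n ≤ 1 := fun n => pow_le_one₀ hδ0.le hδ1.le
  have hpowb : ∀ n : ℕ, ‖TP ^ n‖ ≤ 1 + C := by
    intro n
    apply ContinuousLinearMap.opNorm_le_bound _ (by linarith)
    intro g
    apply lp.norm_le_of_forall_le (mul_nonneg (by linarith) (norm_nonneg g))
    intro x
    rw [Real.norm_eq_abs, hTPn n g x, abs_div, abs_of_pos (hV0 x), div_le_iff₀ (hV0 x)]
    have h1 := hPn_bound n g x
    have h2 : ‖g‖ * (δ ^ n * V x + C) ≤ (1 + C) * ‖g‖ * V x := by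
      have h3 : δ ^ n * V x + C ≤ (1 + C) * V x := by
        nlinarith [hδn1 n, hV x, mul_le_mul_of_nonneg_right (hδn1 n) (hV0 x).le]
      calc ‖g‖ * (δ ^ n * V x + C) ≤ ‖g‖ * ((1 + C) * V x) :=
            mul_le_mul_of_nonneg_left h3 (norm_nonneg g)
        _ = (1 + C) * ‖g‖ * V x := by ring
    linarith
  refine ⟨⟨1 + C, hpowb⟩, ?_⟩
  -- key compactness estimate
  have hest : ∀ (m : ℕ) (R : ℝ), 1 ≤ R →
      ∃ K : lp (fun _ : X => ℝ) ∞ →L[ℝ] lp (fun _ : X => ℝ) ∞,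
      IsCompactOperator K ∧ ‖TP ^ (ℓ + m) - K‖ ≤ (1 + C) * (δ ^ m + C / R) := by
    intro m R hR
    have hR0 : (0:ℝ) < R := lt_of_lt_of_le one_pos hR
    refine ⟨S.comp ((weakDriftTrunc V R).comp (TP ^ m)), ?_, ?_⟩
    · have h1 := hScompact.comp_clm ((weakDriftTrunc V R).comp (TP ^ m))
      simpa [ContinuousLinearMap.coe_comp', Function.comp] using h1
    · have hb : (0:ℝ) ≤ (1 + C) * (δ ^ m + C / R) := by positivity
      apply ContinuousLinearMap.opNorm_le_bound _ hb
      intro g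
      apply lp.norm_le_of_forall_le (mul_nonneg hb (norm_nonneg g))
      intro x
      have e1 : (TP ^ (ℓ + m)) g x = (P ^ ℓ) ((P ^ m) (fun z => g z * V z)) x / V x := by
        rw [hTPn (ℓ + m) g x, pow_add, Module.End.mul_apply]
      have e2 : (S.comp ((weakDriftTrunc V R).comp (TP ^ m))) g x
          = (P ^ ℓ) (fun y => if |V y| ≤ R then (P ^ m) (fun z => g z * V z) y else 0) x / V x := by
        rw [ContinuousLinearMap.comp_apply, ContinuousLinearMap.comp_apply,
          hS ((weakDriftTrunc V R) ((TP ^ m) g)) x]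
        have hfun : (fun y => ((weakDriftTrunc V R) ((TP ^ m) g)) y)
            = (fun y => if |V y| ≤ R then (P ^ m) (fun z => g z * V z) y else 0) := by
          funext y
          rw [weakDriftTrunc_apply]
          split_ifs
          · rw [hTPn m g y, div_mul_cancel₀ _ (hVne y)]
          · rfl
        rw [hfun]
      have e3 : ((TP ^ (ℓ + m) - S.comp ((weakDriftTrunc V R).comp (TP ^ m))) g) x
          = (P ^ ℓ) (fun y => if |V y| ≤ R then 0 else (P ^ m) (fun z => g z * V z) y) x / V x := by
        rw [ContinuousLinearMap.sub_apply, lp.coeFn_sub, Pi.sub_apply, e1, e2, div_sub_div_same]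
        congr 1
        have hsub : (fun y => if |V y| ≤ R then 0 else (P ^ m) (fun z => g z * V z) y)
            = ((P ^ m) fun z => g z * V z)
              - (fun y => if |V y| ≤ R then (P ^ m) (fun z => g z * V z) y else 0) := by
          funext y
          simp only [Pi.sub_apply]
          split_ifs <;> ring
        rw [hsub, map_sub, Pi.sub_apply]
      rw [Real.norm_eq_abs, e3, abs_div, abs_of_pos (hV0 x), div_le_iff₀ (hV0 x)]
      have hbnd : ∀ y, |(fun y => if |V y| ≤ R then 0 else (P ^ m) (fun z => g z * V z) y) y|
          ≤ ((‖g‖ * (δ ^ m + C / R)) • V) y := by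
        intro y
        simp only [Pi.smul_apply, smul_eq_mul]
        split_ifs with hy
        · rw [abs_zero]
          exact mul_nonneg (mul_nonneg (norm_nonneg g)
            (add_nonneg (pow_nonneg hδ0.le m) (div_nonneg hC0.le hR0.le))) (hV0 y).le
        · push_neg at hy
          have hyV : R < V y := by rwa [abs_of_pos (hV0 y)] at hy
          have h1 := hPn_bound m g y
          have h2 : C ≤ C / R * V y := by
            rw [div_mul_eq_mul_div, le_div_iff₀ hR0]
            nlinarith
          calc |(P ^ m) (fun z => g z * V z) y| ≤ ‖g‖ * (δ ^ m * V y + C) := h1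
            _ ≤ ‖g‖ * (δ ^ m + C / R) * V y := by nlinarith [norm_nonneg g]
      have h4 := habsn ℓ _ _ hbnd x
      rw [map_smul] at h4
      simp only [Pi.smul_apply, smul_eq_mul] at h4
      have h5 : (P ^ ℓ) V x ≤ (1 + C) * V x := by
        have := hdriftC ℓ x
        nlinarith [mul_le_mul_of_nonneg_right (hδn1 ℓ) (hV0 x).le, hV x]
      calc |(P ^ ℓ) (fun y => if |V y| ≤ R then 0 else (P ^ m) (fun z => g z * V z) y) x|
          ≤ ‖g‖ * (δ ^ m + C / R) * (P ^ ℓ) V x := h4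
        _ ≤ ‖g‖ * (δ ^ m + C / R) * ((1 + C) * V x) := by
            apply mul_le_mul_of_nonneg_left h5 (by positivity)
        _ = (1 + C) * (δ ^ m + C / R) * ‖g‖ * V x := by ring
  -- distance to compacts
  have hdn_nonneg : ∀ n : ℕ,
      0 ≤ sInf {r : ℝ | ∃ K : lp (fun _ : X => ℝ) ∞ →L[ℝ] lp (fun _ : X => ℝ) ∞,
        IsCompactOperator K ∧ ‖TP ^ n - K‖ = r} := by
    intro n
    apply Real.sInf_nonneg
    rintro r ⟨K, -, rfl⟩
    exact norm_nonneg _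
  have hbdd : ∀ n : ℕ,
      BddBelow {r : ℝ | ∃ K : lp (fun _ : X => ℝ) ∞ →L[ℝ] lp (fun _ : X => ℝ) ∞,
        IsCompactOperator K ∧ ‖TP ^ n - K‖ = r} := by
    intro n
    refine ⟨0, ?_⟩
    rintro r ⟨K, -, rfl⟩
    exact norm_nonneg _
  have hdn_le : ∀ m : ℕ,
      sInf {r : ℝ | ∃ K : lp (fun _ : X => ℝ) ∞ →L[ℝ] lp (fun _ : X => ℝ) ∞,
        IsCompactOperator K ∧ ‖TP ^ (ℓ + m) - K‖ = r} ≤ (1 + C) * δ ^ m := by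
    intro m
    by_contra hcon
    push_neg at hcon
    set D := sInf {r : ℝ | ∃ K : lp (fun _ : X => ℝ) ∞ →L[ℝ] lp (fun _ : X => ℝ) ∞,
        IsCompactOperator K ∧ ‖TP ^ (ℓ + m) - K‖ = r} with hD
    set ε : ℝ := D - (1 + C) * δ ^ m with hεdef
    have hεpos : 0 < ε := by simp only [hεdef]; linarith
    set R : ℝ := max 1 ((1 + C) * C / ε + 1) with hRdef
    have hR1 : 1 ≤ R := le_max_left _ _
    have hR0 : (0:ℝ) < R := lt_of_lt_of_le one_pos hR1
    obtain ⟨K, hKc, hKle⟩ := hest m R hR1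
    have hmem : ‖TP ^ (ℓ + m) - K‖ ∈ {r : ℝ | ∃ K : lp (fun _ : X => ℝ) ∞ →L[ℝ] lp (fun _ : X => ℝ) ∞,
        IsCompactOperator K ∧ ‖TP ^ (ℓ + m) - K‖ = r} := ⟨K, hKc, rfl⟩
    have hDle : D ≤ (1 + C) * δ ^ m + (1 + C) * C / R := by
      calc D ≤ ‖TP ^ (ℓ + m) - K‖ := csInf_le (hbdd _) hmem
        _ ≤ (1 + C) * (δ ^ m + C / R) := hKle
        _ = (1 + C) * δ ^ m + (1 + C) * C / R := by ring
    have hfrac : (1 + C) * C / R < ε := by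
      rw [div_lt_iff₀ hR0]
      have h1 : (1 + C) * C / ε + 1 ≤ R := le_max_right _ _
      have h2 : ε * ((1 + C) * C / ε) = (1 + C) * C := by field_simp
      nlinarith
    simp only [hεdef] at hfrac
    linarith
  -- the limsup argument
  have hmain : ∀ ε : ℝ, 0 < ε → essRadius TP ≤ δ + ε := by
    intro ε hε
    unfold essRadius
    refine Filter.limsup_le_of_le ?_ ?_
    · exact isCoboundedUnder_le_of_le Filter.atTop
        (fun n => Real.rpow_nonneg (hdn_nonneg n) _)
    · set B : ℝ := (1 + C) / δ ^ ℓ with hBdef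
      have hB0 : 0 < B := div_pos (by linarith) (pow_pos hδ0 ℓ)
      have h0 : Tendsto (fun n : ℕ => ((n:ℝ))⁻¹) atTop (nhds 0) :=
        tendsto_inv_atTop_zero.comp tendsto_natCast_atTop_atTop
      have h1 : Tendsto (fun n : ℕ => B ^ ((n:ℝ)⁻¹)) atTop (nhds 1) := by
        have h2 := (Real.continuousAt_const_rpow (a := B) (b := 0) hB0.ne').tendsto.comp h0
        simpa [Function.comp_def] using h2
      have htend : Tendsto (fun n : ℕ => B ^ ((n:ℝ)⁻¹) * δ) atTop (nhds δ) := by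
        have := h1.mul_const δ
        simpa using this
      have hev1 : ∀ᶠ n : ℕ in atTop, B ^ ((n:ℝ)⁻¹) * δ ≤ δ + ε :=
        htend.eventually (eventually_le_nhds (by linarith))
      filter_upwards [hev1, eventually_ge_atTop ℓ, eventually_ge_atTop 1] with n h1' h2' h3'
      have hnn : ((n:ℝ)) ≠ 0 := Nat.cast_ne_zero.2 (by omega)
      have e1 : ℓ + (n - ℓ) = n := by omega
      have hdle : sInf {r : ℝ | ∃ K : lp (fun _ : X => ℝ) ∞ →L[ℝ] lp (fun _ : X => ℝ) ∞,
          IsCompactOperator K ∧ ‖TP ^ n - K‖ = r} ≤ (1 + C) * δ ^ (n - ℓ) := by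
        have := hdn_le (n - ℓ)
        rwa [e1] at this
      have e2 : (1 + C) * δ ^ (n - ℓ) = B * δ ^ n := by
        rw [pow_sub₀ δ hδ0.ne' h2', hBdef]
        field_simp
      have e3 : (sInf {r : ℝ | ∃ K : lp (fun _ : X => ℝ) ∞ →L[ℝ] lp (fun _ : X => ℝ) ∞,
          IsCompactOperator K ∧ ‖TP ^ n - K‖ = r}) ^ ((n:ℝ)⁻¹) ≤ (B * δ ^ n) ^ ((n:ℝ)⁻¹) := by
        apply Real.rpow_le_rpow (hdn_nonneg n) _ (by positivity)
        rw [← e2]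
        exact hdle
      have e4 : (B * δ ^ n) ^ ((n:ℝ)⁻¹) = B ^ ((n:ℝ)⁻¹) * δ := by
        rw [Real.mul_rpow hB0.le (pow_nonneg hδ0.le n)]
        congr 1
        rw [← Real.rpow_natCast δ n, ← Real.rpow_mul hδ0.le, mul_inv_cancel₀ hnn, Real.rpow_one]
      calc (sInf {r : ℝ | ∃ K : lp (fun _ : X => ℝ) ∞ →L[ℝ] lp (fun _ : X => ℝ) ∞,
          IsCompactOperator K ∧ ‖TP ^ n - K‖ = r}) ^ ((n:ℝ)⁻¹)
          ≤ (B * δ ^ n) ^ ((n:ℝ)⁻¹) := e3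
        _ = B ^ ((n:ℝ)⁻¹) * δ := e4
        _ ≤ δ + ε := h1'
  by_contra hcon
  push_neg at hcon
  have := hmain ((essRadius TP - δ) / 2) (by linarith)
  linarith
end

section
/- In the discrete truncation setting, if PV ≤ δV + L·1_ℕ with δ ∈ (0,1), L > 0 and V increasing unbounded with V(0)=1, then for every k ≥ 1, ‖P̂_k − P‖_{0,1} ≤ K/V(k) with K := max(2(δ+L), 1), where ‖T‖_{0,1} = sup{sup_i |(Tf)(i)|/V(i) : sup_i |f(i)| ≤ 1}. In particular ‖P̂_k − P‖_{0,1} → 0 as k → ∞. -/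
/-- The truncated-augmented sub-Markov kernel on `ℕ`. -/
noncomputable def truncAug (P : ℕ → ℕ → ℝ) (k : ℕ) (i j : ℕ) : ℝ :=
  if i ≤ k then
    (if j < k then P i j else if j = k then ∑' l : ℕ, (if k ≤ l then P i l else 0) else 0)
  else 0

private lemma summable_ite_of {p : ℕ → Prop} [DecidablePred p] {f g : ℕ → ℝ}
    (hg : Summable g) (hg0 : ∀ j, 0 ≤ g j) (h : ∀ j, p j → |f j| ≤ g j) :
    Summable fun j => if p j then f j else 0 := by
  refine Summable.of_norm_bounded hg fun j => ?_
  by_cases hp : p j <;> simp [hp, Real.norm_eq_abs, h j, hg0 j]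

/- STATEMENT 11: In the discrete truncation setting, if `P V ≤ δ V + L·1` then for every
`k ≥ 1` one has `‖P̂ₖ − P‖_{0,1} ≤ K/V(k)` with `K = max(2(δ+L), 1)`; that is, for every `f`
with `‖f‖₀ ≤ 1` and every `i`, `|(P̂ₖf)(i) − (Pf)(i)| ≤ (K/V(k))·V(i)`.  In particular
`‖P̂ₖ − P‖_{0,1} → 0` as `k → ∞`. -/
theorem truncAug_zero_one_norm
    (P : ℕ → ℕ → ℝ)
    (hPnonneg : ∀ i j, 0 ≤ P i j)
    (hProw : ∀ i, Summable (P i))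
    (hPstoch : ∀ i, ∑' j, P i j = 1)
    (V : ℕ → ℝ) (hV1 : ∀ n, 1 ≤ V n) (hV0 : V 0 = 1) (hVmono : Monotone V)
    (hVtop : Filter.Tendsto V Filter.atTop Filter.atTop)
    (δ L : ℝ) (hδ0 : 0 < δ) (hδ1 : δ < 1) (hL : 0 < L)
    (hsum : ∀ i, Summable (fun j => P i j * V j))
    (hdrift : ∀ i, ∑' j, P i j * V j ≤ δ * V i + L) :
    (∀ k : ℕ, 1 ≤ k → ∀ f : ℕ → ℝ, (∀ j, |f j| ≤ 1) → ∀ i,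
      |(∑' j, truncAug P k i j * f j) - ∑' j, P i j * f j|
        ≤ max (2 * (δ + L)) 1 / V k * V i) ∧
    Filter.Tendsto (fun k : ℕ => max (2 * (δ + L)) 1 / V k) Filter.atTop (nhds 0) := by
  have hVpos : ∀ n, 0 < V n := fun n => lt_of_lt_of_le one_pos (hV1 n)
  constructor
  · intro k hk f hf i
    have hKge : (1:ℝ) ≤ max (2 * (δ + L)) 1 := le_max_right _ _
    have hfP : ∀ j, |P i j * f j| ≤ P i j := fun j => by
      rw [abs_mul, abs_of_nonneg (hPnonneg i j)]
      exact mul_le_of_le_one_right (hPnonneg i j) (hf j)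
    have hsf : Summable (fun j => P i j * f j) :=
      Summable.of_norm_bounded (hProw i) fun j => by
        rw [Real.norm_eq_abs]; exact hfP j
    by_cases hik : i ≤ k
    · -- main case: i ≤ k
      set S : ℝ := ∑' l : ℕ, (if k ≤ l then P i l else 0) with hS
      -- summabilities
      have hsg1 : Summable fun j => if j < k then P i j * f j else 0 :=
        summable_ite_of (hProw i) (hPnonneg i) (fun j _ => hfP j)
      have hsg2 : Summable fun j => if k ≤ j then P i j * f j else 0 :=
        summable_ite_of (hProw i) (hPnonneg i) (fun j _ => hfP j)
      have hsgS : Summable fun j => if k ≤ j then P i j else 0 :=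
        summable_ite_of (hProw i) (hPnonneg i)
          (fun j _ => le_of_eq (abs_of_nonneg (hPnonneg i j)))
      have hsgk : Summable fun j => if k ≤ j then P i j * f k else 0 :=
        summable_ite_of ((hProw i).mul_right 2)
          (fun j => mul_nonneg (hPnonneg i j) (by norm_num))
          (fun j _ => by
            rw [abs_mul, abs_of_nonneg (hPnonneg i j)]
            nlinarith [hPnonneg i j, hf k, abs_nonneg (f k)])
      -- LHS decomposition
      have eq1 : (∑' j, truncAug P k i j * f j)
          = (∑' j, if j < k then P i j * f j else 0) + S * f k := by
        have hptw : ∀ j, truncAug P k i j * f j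
            = (if j < k then P i j * f j else 0) + (if j = k then S * f k else 0) := by
          intro j
          unfold truncAug
          rw [if_pos hik]
          by_cases h1 : j < k
          · have : j ≠ k := Nat.ne_of_lt h1
            simp [h1, this]
          · by_cases h2 : j = k
            · subst h2; simp [h1, ← hS]
            · simp [h1, h2]
        calc (∑' j, truncAug P k i j * f j)
            = ∑' j, ((if j < k then P i j * f j else 0) + (if j = k then S * f k else 0)) := by
              exact tsum_congr hptw
          _ = (∑' j, if j < k then P i j * f j else 0)
              + (∑' j, if j = k then S * f k else 0) :=
              Summable.tsum_add hsg1 (hasSum_ite_eq k (S * f k)).summable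
          _ = (∑' j, if j < k then P i j * f j else 0) + S * f k := by
              rw [(hasSum_ite_eq k (S * f k)).tsum_eq]
      have eq2 : (∑' j, P i j * f j)
          = (∑' j, if j < k then P i j * f j else 0)
            + (∑' j, if k ≤ j then P i j * f j else 0) := by
        rw [← Summable.tsum_add hsg1 hsg2]
        refine tsum_congr fun j => ?_
        by_cases h1 : j < k
        · simp [h1, Nat.not_le.mpr h1]
        · simp [h1, Nat.le_of_not_lt h1]
      have eq3 : S * f k = ∑' j, (if k ≤ j then P i j * f k else 0) := by
        rw [hS, ← tsum_mul_right]
        exact tsum_congr fun j => by by_cases h : k ≤ j <;> simp [h]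
      have eqdiff : (∑' j, truncAug P k i j * f j) - (∑' j, P i j * f j)
          = ∑' j, (if k ≤ j then P i j * (f k - f j) else 0) := by
        rw [eq1, eq2, eq3]
        have : ∀ j, (if k ≤ j then P i j * (f k - f j) else 0)
            = (if k ≤ j then P i j * f k else 0) - (if k ≤ j then P i j * f j else 0) := by
          intro j; by_cases h : k ≤ j <;> simp [h] <;> ring
        rw [tsum_congr this, Summable.tsum_sub hsgk hsg2]
        ring
      -- bound the tail sum S
      have hSbound : V k * S ≤ δ * V i + L := by
        have hle : ∀ j, V k * (if k ≤ j then P i j else 0) ≤ P i j * V j := by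
          intro j
          by_cases h : k ≤ j
          · simp only [h, if_true]
            calc V k * P i j ≤ V j * P i j :=
                  mul_le_mul_of_nonneg_right (hVmono h) (hPnonneg i j)
              _ = P i j * V j := mul_comm _ _
          · simp only [h, if_false, mul_zero]
            exact mul_nonneg (hPnonneg i j) (hVpos j).le
        calc V k * S = ∑' j, V k * (if k ≤ j then P i j else 0) := (tsum_mul_left).symm
          _ ≤ ∑' j, P i j * V j := Summable.tsum_le_tsum hle (hsgS.mul_left _) (hsum i)
          _ ≤ δ * V i + L := hdrift i
      have hSnn : 0 ≤ S := tsum_nonneg fun j => by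
        by_cases h : k ≤ j <;> simp [h, hPnonneg i j]
      -- bound the difference
      have hdabs : |∑' j, (if k ≤ j then P i j * (f k - f j) else 0)|
          ≤ ∑' j, (if k ≤ j then 2 * P i j else 0) := by
        have hsb : Summable fun j => if k ≤ j then 2 * P i j else 0 := by
          have := hsgS.mul_left 2
          refine this.congr fun j => ?_
          by_cases h : k ≤ j <;> simp [h]
        have hsd : Summable fun j => if k ≤ j then P i j * (f k - f j) else 0 :=
          summable_ite_of hsb
            (fun j => by by_cases h : k ≤ j <;> simp [h] <;> nlinarith [hPnonneg i j])
            (fun j hj => by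
              simp only [hj, if_true, abs_mul, abs_of_nonneg (hPnonneg i j)]
              have : |f k - f j| ≤ 2 := by
                calc |f k - f j| ≤ |f k| + |f j| := abs_sub _ _
                  _ ≤ 1 + 1 := add_le_add (hf k) (hf j)
                  _ = 2 := by norm_num
              nlinarith [hPnonneg i j])
        calc |∑' j, (if k ≤ j then P i j * (f k - f j) else 0)|
            ≤ ∑' j, |if k ≤ j then P i j * (f k - f j) else 0| := by
              have h := norm_tsum_le_tsum_norm
                (f := fun j => if k ≤ j then P i j * (f k - f j) else 0)
                (by simpa only [Real.norm_eq_abs] using hsd.abs)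
              simpa only [Real.norm_eq_abs] using h
          _ ≤ ∑' j, (if k ≤ j then 2 * P i j else 0) := by
              refine Summable.tsum_le_tsum (fun j => ?_) hsd.abs hsb
              by_cases h : k ≤ j
              · simp only [h, if_true, abs_mul, abs_of_nonneg (hPnonneg i j)]
                have : |f k - f j| ≤ 2 := by
                  calc |f k - f j| ≤ |f k| + |f j| := abs_sub _ _
                    _ ≤ 1 + 1 := add_le_add (hf k) (hf j)
                    _ = 2 := by norm_num
                nlinarith [hPnonneg i j]
              · simp [h]
      have hsum2S : (∑' j, (if k ≤ j then 2 * P i j else 0)) = 2 * S := by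
        rw [hS, ← tsum_mul_left]
        exact tsum_congr fun j => by by_cases h : k ≤ j <;> simp [h]
      rw [eqdiff]
      calc |∑' j, (if k ≤ j then P i j * (f k - f j) else 0)| ≤ 2 * S := by
            rw [← hsum2S]; exact hdabs
        _ ≤ 2 * ((δ * V i + L) / V k) := by
            have : S ≤ (δ * V i + L) / V k := (le_div_iff₀' (hVpos k)).mpr hSbound
            linarith
        _ = 2 * (δ * V i + L) / V k := by ring
        _ ≤ max (2 * (δ + L)) 1 * V i / V k := by
            have h1 : 1 ≤ V i := hV1 i
            have h2 : 2 * (δ + L) ≤ max (2 * (δ + L)) 1 := le_max_left _ _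
            have hnum : 2 * (δ * V i + L) ≤ max (2 * (δ + L)) 1 * V i := by nlinarith
            exact (div_le_div_iff_of_pos_right (hVpos k)).mpr hnum
        _ = max (2 * (δ + L)) 1 / V k * V i := by ring
    · -- case i > k : truncated kernel row is zero
      have hzero : (∑' j, truncAug P k i j * f j) = 0 := by
        have : ∀ j, truncAug P k i j * f j = 0 := by
          intro j; unfold truncAug; rw [if_neg hik, zero_mul]
        rw [tsum_congr this, tsum_zero]
      rw [hzero, zero_sub, abs_neg]
      have h1 : |∑' j, P i j * f j| ≤ 1 := by
        calc |∑' j, P i j * f j| ≤ ∑' j, |P i j * f j| := by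
              have h := norm_tsum_le_tsum_norm (f := fun j => P i j * f j)
                (by simpa only [Real.norm_eq_abs] using hsf.abs)
              simpa only [Real.norm_eq_abs] using h
          _ ≤ ∑' j, P i j := Summable.tsum_le_tsum hfP hsf.abs (hProw i)
          _ = 1 := hPstoch i
      have hki : k ≤ i := le_of_lt (Nat.lt_of_not_le hik)
      have hVki : V k ≤ V i := hVmono hki
      calc |∑' j, P i j * f j| ≤ 1 := h1
        _ ≤ max (2 * (δ + L)) 1 / V k * V i := by
            rw [div_mul_eq_mul_div, le_div_iff₀ (hVpos k), one_mul]
            calc V k ≤ V i := hVki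
              _ = 1 * V i := (one_mul _).symm
              _ ≤ max (2 * (δ + L)) 1 * V i :=
                  mul_le_mul_of_nonneg_right (le_max_right _ _) (hVpos i).le
  · exact Filter.Tendsto.div_atTop tendsto_const_nhds hVtop
end

section
/- Let P be a Markov kernel on ℕ with unbounded increasing weight V (V(0)=1, lim_k V(k) = ∞). Then the inclusion operator B_0 → B_1 is compact, and hence if PV ≤ δV + L·1_ℕ with δ ∈ (0,1), then P : B_0 → B_1 is compact and P is quasi-compact on B_1 with r_ess(P) ≤ δ. -/
open Filter Topology
open scoped ENNReal

set_option synthInstance.maxHeartbeats 1000000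
set_option maxHeartbeats 2000000

instance : Nontrivial (lp (fun _ : ℕ => ℝ) ∞) := by
  refine nontrivial_of_ne (lp.single ∞ 0 (1:ℝ)) 0 fun h => ?_
  have : (lp.single ∞ 0 (1:ℝ) : ℕ → ℝ) 0 = ((0 : lp (fun _ : ℕ => ℝ) ∞) : ℕ → ℝ) 0 := by rw [h]
  rw [lp.single_apply_self] at this
  simp at this

local notation "Binf" => lp (fun _ : ℕ => ℝ) ∞

/-- Evaluation at a coordinate as a continuous linear functional on `lp _ ∞`. -/
noncomputable def evalB (i : ℕ) : Binf →L[ℝ] ℝ :=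
  LinearMap.mkContinuous
    { toFun := fun f => f i
      map_add' := fun f g => congrFun (lp.coeFn_add f g) i
      map_smul' := fun c f => congrFun (lp.coeFn_smul c f) i }
    1 (fun f => by
      rw [one_mul]; exact lp.norm_apply_le_norm ENNReal.top_ne_zero f i)

@[simp] lemma evalB_apply (i : ℕ) (f : Binf) : evalB i f = f i := rfl

/-- Truncation to the first `N` coordinates, as a finite-rank operator. -/
noncomputable def truncB (N : ℕ) : Binf →L[ℝ] Binf :=
  ∑ i ∈ Finset.range N, (evalB i).smulRight (lp.single ∞ i (1 : ℝ))

lemma truncB_apply (N : ℕ) (g : Binf) (i : ℕ) :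
    truncB N g i = if i < N then g i else 0 := by
  classical
  have h1 : truncB N g = ∑ k ∈ Finset.range N, (g k) • lp.single ∞ k (1 : ℝ) := by
    simp [truncB, ContinuousLinearMap.sum_apply]
  have h2 : (truncB N g : ℕ → ℝ) i
      = ∑ k ∈ Finset.range N, (g k) * ((lp.single ∞ k (1 : ℝ) : ℕ → ℝ) i) := by
    rw [h1, lp.coeFn_sum, Finset.sum_apply]
    refine Finset.sum_congr rfl fun k _ => ?_
    rw [lp.coeFn_smul, Pi.smul_apply, smul_eq_mul]
  rw [h2]
  by_cases hi : i < N
  · rw [if_pos hi]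
    rw [Finset.sum_eq_single i]
    · rw [lp.single_apply_self]; simp
    · intro k _ hk
      rw [lp.single_apply_ne _ _ _ (Ne.symm hk)]; simp
    · intro h; exact absurd (Finset.mem_range.2 hi) h
  · rw [if_neg hi]
    refine Finset.sum_eq_zero fun k hk => ?_
    have : i ≠ k := by
      intro h; exact hi (h ▸ Finset.mem_range.1 hk)
    rw [lp.single_apply_ne _ _ _ this]; simp

lemma isCompactOperator_smulRight (φ : Binf →L[ℝ] ℝ) (v : Binf) :
    IsCompactOperator (φ.smulRight v) := by
  refine ⟨(fun t : ℝ => t • v) '' Metric.closedBall 0 ‖φ‖,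
    ((isCompact_closedBall 0 ‖φ‖).image (by fun_prop)), ?_⟩
  have hb : Metric.ball (0 : Binf) 1 ∈ (𝓝 (0 : Binf)) := Metric.ball_mem_nhds _ one_pos
  filter_upwards [hb] with g hg
  refine ⟨φ g, ?_, rfl⟩
  rw [Metric.mem_closedBall, dist_zero_right]
  calc ‖φ g‖ ≤ ‖φ‖ * ‖g‖ := φ.le_opNorm g
    _ ≤ ‖φ‖ * 1 := by
        have := mem_ball_zero_iff.1 hg
        exact mul_le_mul_of_nonneg_left this.le (norm_nonneg φ)
    _ = ‖φ‖ := mul_one _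

lemma isCompactOperator_truncB (N : ℕ) : IsCompactOperator (truncB N) := by
  classical
  unfold truncB
  induction (Finset.range N) using Finset.induction with
  | empty => simpa using (isCompactOperator_zero : IsCompactOperator (0 : Binf → Binf))
  | @insert a s hx ih =>
    rw [Finset.sum_insert hx]
    have h1 := isCompactOperator_smulRight (evalB a) (lp.single ∞ a (1 : ℝ))
    have h2 := h1.add ih
    rw [ContinuousLinearMap.coe_add']
    exact h2

/-- If `A g i` is pointwise bounded by `‖g‖ * (c + d / V i)`, then `A` is approximated by
its truncations. -/
lemma approx_norm {V : ℕ → ℝ} (hV1 : ∀ n, 1 ≤ V n) (hVmono : Monotone V)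
    (A : Binf →L[ℝ] Binf) (c d : ℝ) (hc : 0 ≤ c) (hd : 0 ≤ d)
    (hA : ∀ g : Binf, ∀ i, |A g i| ≤ ‖g‖ * (c + d / V i)) (N : ℕ) :
    ‖A - (truncB N).comp A‖ ≤ c + d / V N := by
  have hVN : (0:ℝ) < V N := lt_of_lt_of_le one_pos (hV1 N)
  refine ContinuousLinearMap.opNorm_le_bound _ (by positivity) fun g => ?_
  rw [mul_comm]
  refine lp.norm_le_of_forall_le (by positivity) fun i => ?_
  rw [ContinuousLinearMap.sub_apply, ContinuousLinearMap.comp_apply, lp.coeFn_sub,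
    Pi.sub_apply, truncB_apply]
  by_cases hi : i < N
  · simp [hi]
    positivity
  · rw [if_neg hi, sub_zero, Real.norm_eq_abs]
    have hVi : (0:ℝ) < V i := lt_of_lt_of_le one_pos (hV1 i)
    calc |A g i| ≤ ‖g‖ * (c + d / V i) := hA g i
      _ ≤ ‖g‖ * (c + d / V N) := by
          gcongr
          exact hVmono (le_of_not_gt hi)

/- STATEMENT 12: For a Markov kernel `P` on `ℕ` with an unbounded increasing weight `V`
(`V 0 = 1`, `V k → ∞`): the inclusion `B₀ → B₁` is compact, and hence if `P V ≤ δ V + L·1`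
with `δ ∈ (0,1)`, then `P : B₀ → B₁` is compact, and `P` is quasi-compact on `B₁` with
`r_ess(P) ≤ δ`.  Both `B₀` and `B₁` are represented as `lp ∞` (the latter via `f ↦ f/V`):
`J` is the inclusion `B₀ → B₁`, `S` represents `P : B₀ → B₁`, and `TP` represents `P` on `B₁`. -/
theorem discrete_inclusion_compact_ess_radius
    (P : ℕ → ℕ → ℝ)
    (hPnonneg : ∀ i j, 0 ≤ P i j)
    (hProw : ∀ i, Summable (P i))
    (hPstoch : ∀ i, ∑' j, P i j = 1)
    (V : ℕ → ℝ) (hV1 : ∀ n, 1 ≤ V n) (hV0 : V 0 = 1) (hVmono : Monotone V)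
    (hVtop : Tendsto V atTop atTop)
    (δ L : ℝ) (hδ0 : 0 < δ) (hδ1 : δ < 1) (hL : 0 < L)
    (hsum : ∀ i, Summable (fun j => P i j * V j))
    (hdrift : ∀ i, ∑' j, P i j * V j ≤ δ * V i + L)
    (J : lp (fun _ : ℕ => ℝ) ∞ →L[ℝ] lp (fun _ : ℕ => ℝ) ∞)
    (hJ : ∀ g : lp (fun _ : ℕ => ℝ) ∞, ∀ i, J g i = g i / V i)
    (S : lp (fun _ : ℕ => ℝ) ∞ →L[ℝ] lp (fun _ : ℕ => ℝ) ∞)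
    (hS : ∀ g : lp (fun _ : ℕ => ℝ) ∞, ∀ i, S g i = (∑' j, P i j * g j) / V i)
    (TP : lp (fun _ : ℕ => ℝ) ∞ →L[ℝ] lp (fun _ : ℕ => ℝ) ∞)
    (hTP : ∀ g : lp (fun _ : ℕ => ℝ) ∞, ∀ i,
      TP g i = (∑' j, P i j * (g j * V j)) / V i) :
    IsCompactOperator J ∧ IsCompactOperator S ∧ essRadius TP ≤ δ := by
  classical
  have hVpos : ∀ i, (0:ℝ) < V i := fun i => lt_of_lt_of_le one_pos (hV1 i)
  have habs_le_norm : ∀ (g : Binf) i, |g i| ≤ ‖g‖ := fun g i => by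
    simpa [Real.norm_eq_abs] using lp.norm_apply_le_norm ENNReal.top_ne_zero g i
  -- compactness of operators approximated by truncations with vanishing tail
  have compact_of_bound : ∀ (A : Binf →L[ℝ] Binf),
      (∀ g : Binf, ∀ i, |A g i| ≤ ‖g‖ * ((0:ℝ) + 1 / V i)) → IsCompactOperator A := by
    intro A hA
    have happrox := fun N => approx_norm hV1 hVmono A 0 1 le_rfl zero_le_one hA N
    have hlim : Tendsto (fun N => (truncB N).comp A) atTop (𝓝 A) := by
      rw [tendsto_iff_norm_sub_tendsto_zero]
      refine squeeze_zero (g := fun N => (0:ℝ) + 1 / V N) (fun N => norm_nonneg _) (fun N => ?_) ?_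
      · rw [norm_sub_rev]
        simpa using happrox N
      · exact hVtop.inv_tendsto_atTop.congr fun N => by simp [one_div]
    refine isCompactOperator_of_tendsto hlim (Eventually.of_forall fun N => ?_)
    rw [ContinuousLinearMap.coe_comp']
    exact (isCompactOperator_truncB N).comp_clm A
  -- bound for J
  have hJb : ∀ g : Binf, ∀ i, |J g i| ≤ ‖g‖ * ((0:ℝ) + 1 / V i) := by
    intro g i
    rw [hJ g i, zero_add, abs_div, abs_of_pos (hVpos i), mul_one_div, div_le_div_iff_of_pos_right (hVpos i)]
    exact habs_le_norm g i
  have hJcompact : IsCompactOperator J := compact_of_bound J hJb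
  -- bound for S
  have hSb : ∀ g : Binf, ∀ i, |S g i| ≤ ‖g‖ * ((0:ℝ) + 1 / V i) := by
    intro g i
    rw [hS g i, zero_add, abs_div, abs_of_pos (hVpos i), mul_one_div, div_le_div_iff_of_pos_right (hVpos i)]
    have habs : ∀ j, |P i j * g j| ≤ P i j * ‖g‖ := fun j => by
      rw [abs_mul, abs_of_nonneg (hPnonneg i j)]
      exact mul_le_mul_of_nonneg_left (habs_le_norm g j) (hPnonneg i j)
    have hs2 : Summable (fun j => P i j * ‖g‖) := (hProw i).mul_right _
    have hs1 : Summable (fun j => |P i j * g j|) :=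
      Summable.of_nonneg_of_le (fun j => abs_nonneg _) habs hs2
    calc |∑' j, P i j * g j| ≤ ∑' j, |P i j * g j| := by
          have := norm_tsum_le_tsum_norm (f := fun j => P i j * (g : ℕ → ℝ) j)
            (by simpa only [Real.norm_eq_abs] using hs1)
          simpa only [Real.norm_eq_abs] using this
      _ ≤ ∑' j, P i j * ‖g‖ := Summable.tsum_le_tsum habs hs1 hs2
      _ = ‖g‖ := by rw [tsum_mul_right, hPstoch, one_mul]
  have hScompact : IsCompactOperator S := compact_of_bound S hSb
  refine ⟨hJcompact, hScompact, ?_⟩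
  -- the iterated drift bound
  have key : ∀ n, ∀ g : Binf, ∀ i,
      |(TP ^ n) g i| ≤ ‖g‖ * δ ^ n + (‖g‖ * L * ∑ k ∈ Finset.range n, δ ^ k) / V i := by
    intro n
    induction n with
    | zero =>
      intro g i
      simp only [pow_zero, ContinuousLinearMap.one_apply, Finset.range_zero,
        Finset.sum_empty, mul_zero, zero_div, add_zero, mul_one]
      exact habs_le_norm g i
    | succ n ih =>
      intro g i
      have hpow : (TP ^ (n + 1)) g = TP ((TP ^ n) g) := by
        rw [pow_succ', ContinuousLinearMap.mul_apply]
      set h : Binf := (TP ^ n) g with hh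
      set a : ℝ := ‖g‖ * δ ^ n with ha
      set b : ℝ := ‖g‖ * L * ∑ k ∈ Finset.range n, δ ^ k with hb
      have ha0 : 0 ≤ a := mul_nonneg (norm_nonneg g) (pow_nonneg hδ0.le n)
      have hb0 : 0 ≤ b := by
        have : 0 ≤ ∑ k ∈ Finset.range n, δ ^ k :=
          Finset.sum_nonneg fun k _ => pow_nonneg hδ0.le k
        positivity
      have hhb : ∀ j, |h j| ≤ a + b / V j := ih g
      have hbnd : ∀ j, |P i j * (h j * V j)| ≤ a * (P i j * V j) + b * P i j := by
        intro j
        rw [abs_mul, abs_mul, abs_of_nonneg (hPnonneg i j), abs_of_pos (hVpos j)]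
        have h1 : |h j| * V j ≤ a * V j + b := by
          have := mul_le_mul_of_nonneg_right (hhb j) (hVpos j).le
          rwa [add_mul, div_mul_cancel₀ _ (hVpos j).ne'] at this
        calc P i j * (|h j| * V j) ≤ P i j * (a * V j + b) :=
              mul_le_mul_of_nonneg_left h1 (hPnonneg i j)
          _ = a * (P i j * V j) + b * P i j := by ring
      have hsummable : Summable (fun j => a * (P i j * V j) + b * P i j) :=
        ((hsum i).mul_left a).add ((hProw i).mul_left b)
      have hs1 : Summable (fun j => |P i j * (h j * V j)|) :=
        Summable.of_nonneg_of_le (fun j => abs_nonneg _) hbnd hsummable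
      have habs : |∑' j, P i j * (h j * V j)| ≤ a * (δ * V i + L) + b := by
        calc |∑' j, P i j * (h j * V j)| ≤ ∑' j, |P i j * (h j * V j)| := by
              have := norm_tsum_le_tsum_norm (f := fun j => P i j * ((h : ℕ → ℝ) j * V j))
                (by simpa only [Real.norm_eq_abs] using hs1)
              simpa only [Real.norm_eq_abs] using this
          _ ≤ ∑' j, (a * (P i j * V j) + b * P i j) := Summable.tsum_le_tsum hbnd hs1 hsummable
          _ = a * (∑' j, P i j * V j) + b * (∑' j, P i j) := by
              rw [Summable.tsum_add ((hsum i).mul_left a) ((hProw i).mul_left b),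
                tsum_mul_left, tsum_mul_left]
          _ ≤ a * (δ * V i + L) + b := by
              rw [hPstoch i, mul_one]
              exact add_le_add_left (mul_le_mul_of_nonneg_left (hdrift i) ha0) _
      rw [hpow, hTP, abs_div, abs_of_pos (hVpos i)]
      have hgoal : (a * (δ * V i + L) + b) / V i
          = ‖g‖ * δ ^ (n + 1) + (‖g‖ * L * ∑ k ∈ Finset.range (n + 1), δ ^ k) / V i := by
        rw [Finset.sum_range_succ, ha, hb]
        have hVne : V i ≠ 0 := (hVpos i).ne'
        field_simp
        ring
      exact le_trans ((div_le_div_iff_of_pos_right (hVpos i)).mpr habs) (le_of_eq hgoal)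
  -- bound on the essential radius
  have hA_mem : ∀ (n N : ℕ), ‖TP ^ n - (truncB N).comp (TP ^ n)‖ ∈
      {r : ℝ | ∃ K : Binf →L[ℝ] Binf, IsCompactOperator K ∧ ‖TP ^ n - K‖ = r} := by
    intro n N
    refine ⟨(truncB N).comp (TP ^ n), ?_, rfl⟩
    rw [ContinuousLinearMap.coe_comp']
    exact (isCompactOperator_truncB N).comp_clm _
  have hAbdd : ∀ n, BddBelow
      {r : ℝ | ∃ K : Binf →L[ℝ] Binf, IsCompactOperator K ∧ ‖TP ^ n - K‖ = r} :=
    fun n => ⟨0, fun r ⟨K, _, hr⟩ => hr ▸ norm_nonneg _⟩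
  have hAne : ∀ n, {r : ℝ | ∃ K : Binf →L[ℝ] Binf,
      IsCompactOperator K ∧ ‖TP ^ n - K‖ = r}.Nonempty :=
    fun n => ⟨_, hA_mem n 0⟩
  have hInf_nonneg : ∀ n, 0 ≤ sInf
      {r : ℝ | ∃ K : Binf →L[ℝ] Binf, IsCompactOperator K ∧ ‖TP ^ n - K‖ = r} :=
    fun n => le_csInf (hAne n) fun r ⟨K, _, hr⟩ => hr ▸ norm_nonneg _
  have hInf_le : ∀ n, sInf
      {r : ℝ | ∃ K : Binf →L[ℝ] Binf, IsCompactOperator K ∧ ‖TP ^ n - K‖ = r} ≤ δ ^ n := by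
    intro n
    refine le_of_forall_pos_le_add fun ε hε => ?_
    set s : ℝ := L * ∑ k ∈ Finset.range n, δ ^ k with hs
    have hs0 : 0 ≤ s := by
      have : 0 ≤ ∑ k ∈ Finset.range n, δ ^ k :=
        Finset.sum_nonneg fun k _ => pow_nonneg hδ0.le k
      positivity
    obtain ⟨N, hN⟩ := (tendsto_atTop.1 hVtop (s / ε)).exists
    have hdiv : s / V N ≤ ε := by
      rw [div_le_iff₀ (hVpos N)]
      calc s = ε * (s / ε) := by field_simp
        _ ≤ ε * V N := mul_le_mul_of_nonneg_left hN hε.le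
    have hb : ∀ g : Binf, ∀ i, |(TP ^ n) g i| ≤ ‖g‖ * (δ ^ n + s / V i) := by
      intro g i
      calc |(TP ^ n) g i| ≤ ‖g‖ * δ ^ n + (‖g‖ * L * ∑ k ∈ Finset.range n, δ ^ k) / V i :=
            key n g i
        _ = ‖g‖ * (δ ^ n + s / V i) := by rw [hs]; ring
    have happrox := approx_norm hV1 hVmono (TP ^ n) (δ ^ n) s
      (pow_nonneg hδ0.le n) hs0 hb N
    calc sInf _ ≤ ‖TP ^ n - (truncB N).comp (TP ^ n)‖ := csInf_le (hAbdd n) (hA_mem n N)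
      _ ≤ δ ^ n + s / V N := happrox
      _ ≤ δ ^ n + ε := add_le_add_right hdiv _
  -- conclude on the limsup
  have hev : ∀ᶠ n : ℕ in atTop,
      (sInf {r : ℝ | ∃ K : Binf →L[ℝ] Binf, IsCompactOperator K ∧ ‖TP ^ n - K‖ = r})
        ^ ((n : ℝ)⁻¹) ≤ δ := by
    rw [eventually_atTop]
    refine ⟨1, fun n hn => ?_⟩
    have hn0 : (n : ℝ) ≠ 0 := Nat.cast_ne_zero.2 (by omega)
    calc (sInf _) ^ ((n : ℝ)⁻¹) ≤ (δ ^ n) ^ ((n : ℝ)⁻¹) :=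
          Real.rpow_le_rpow (hInf_nonneg n) (hInf_le n) (by positivity)
      _ = δ := by
          rw [← Real.rpow_natCast δ n, ← Real.rpow_mul hδ0.le,
            mul_inv_cancel₀ hn0, Real.rpow_one]
  refine Filter.limsup_le_of_le ?_ hev
  exact isCoboundedUnder_le_of_le atTop fun n => Real.rpow_nonneg (hInf_nonneg n) _
end

section
/- Suppose PV ≤ δV + L·1_X with δ ∈ (0,1), and suppose limsup_i (PV)(i)/V(i) > 0 (taken along any exhaustion B_k ↑ X). Then the truncated kernels P̂_k do NOT converge to P in operator norm on B_1: inf_k ‖P − P̂_k‖_1 ≥ limsup_k sup_{i ∉ B_k} (PV)(i)/V(i) > 0. -/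
open Filter

/- STATEMENT 13: Suppose `P V ≤ δ V + L·1` and `limsup_i (PV)(i)/V(i) > 0`.  Then the
truncated kernels `P̂ₖ` do NOT converge to `P` in operator norm on `B₁`: for any sequence
`c k` of upper bounds of `‖P − P̂ₖ‖₁` one has
`c k ≥ limsup_i (PV)(i)/V(i) > 0` for every `k`, and hence `c` does not tend to `0`. -/
theorem truncAug_no_operator_norm_convergence
    (P : ℕ → ℕ → ℝ)
    (hPnonneg : ∀ i j, 0 ≤ P i j)
    (hProw : ∀ i, Summable (P i))
    (hPstoch : ∀ i, ∑' j, P i j = 1)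
    (V : ℕ → ℝ) (hV1 : ∀ n, 1 ≤ V n)
    (δ L : ℝ) (hδ0 : 0 < δ) (hδ1 : δ < 1) (hL : 0 < L)
    (hsum : ∀ i, Summable (fun j => P i j * V j))
    (hdrift : ∀ i, ∑' j, P i j * V j ≤ δ * V i + L)
    (hlimsup : 0 < Filter.limsup (fun i => (∑' j, P i j * V j) / V i) Filter.atTop)
    -- `c k` is an upper bound for the operator norm `‖P − P̂ₖ‖₁` on `B₁`
    (c : ℕ → ℝ)
    (hc : ∀ k, ∀ f : ℕ → ℝ, (∀ j, |f j| ≤ V j) → ∀ i,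
      |(∑' j, P i j * f j) - ∑' j, truncAug P k i j * f j| ≤ c k * V i) :
    (∀ k, Filter.limsup (fun i => (∑' j, P i j * V j) / V i) Filter.atTop ≤ c k) ∧
    ¬ Tendsto c atTop (nhds 0) := by
  have hVpos : ∀ n, 0 < V n := fun n => lt_of_lt_of_le one_pos (hV1 n)
  have hVabs : ∀ j, |V j| ≤ V j := fun j => le_of_eq (abs_of_pos (hVpos j))
  have key : ∀ k, ∀ i, k < i → (∑' j, P i j * V j) / V i ≤ c k := by
    intro k i hki
    have h0 : ∑' j, truncAug P k i j * V j = 0 := by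
      have : ∀ j, truncAug P k i j * V j = 0 := by
        intro j
        simp [truncAug, not_le.mpr hki]
      simp [this]
    have h := hc k V hVabs i
    rw [h0, sub_zero] at h
    have hnn : 0 ≤ ∑' j, P i j * V j :=
      tsum_nonneg fun j => mul_nonneg (hPnonneg i j) (le_of_lt (hVpos j))
    rw [abs_of_nonneg hnn] at h
    exact (div_le_iff₀ (hVpos i)).mpr (by linarith [h])
  have hle : ∀ k, Filter.limsup (fun i => (∑' j, P i j * V j) / V i) Filter.atTop ≤ c k := by
    intro k
    apply limsup_le_of_le
    · refine isCoboundedUnder_le_of_le atTop (x := 0) ?_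
      intro i
      exact div_nonneg (tsum_nonneg fun j => mul_nonneg (hPnonneg i j) (le_of_lt (hVpos j)))
        (le_of_lt (hVpos i))
    · filter_upwards [eventually_gt_atTop k] with i hi
      exact key k i hi
  refine ⟨hle, ?_⟩
  intro htend
  set m := Filter.limsup (fun i => (∑' j, P i j * V j) / V i) Filter.atTop with hm
  have := htend.eventually (eventually_lt_nhds hlimsup)
  rcases this.exists with ⟨k, hk⟩
  exact absurd (hle k) (not_le.mpr hk)
end

section
/- Consider the discrete truncation setting with PV ≤ δV + L·1_ℕ and π the P-invariant probability with π(V) < ∞, and π̂_k the extension of the P_k-invariant probability (φ_k = 1_{B_k}). Then π̂_k(1_ℕ)·|1 − π(φ_k)| = Σ_{j>k} π({j}) ≤ π(V)/V(k) ≤ L/((1−δ)V(k)). Combining with the general total-variation bound yields ‖π̂_k − π‖_TV ≤ (L/(1−δ))·(1 + 2KC_k/ρ_k + A·K·ln V(k)/ln(ρ_k^{−1}))·(1/V(k)), where K = max(2(δ+L),1), A = 1 + L/(1−δ), and (ρ_k, C_k) are a rate and constant in the V-geometric ergodicity of P̂_k. -/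
set_option maxHeartbeats 1000000

private lemma sd {ι : Type*} {f g : ι → ℝ} (h : ∀ j, |f j| ≤ g j) (hg : Summable g) : Summable f :=
  (Summable.of_nonneg_of_le (fun i => abs_nonneg _) h hg).of_abs

private lemma abs_tsum_le_tsum {f g : ℕ → ℝ} (h : ∀ j, |f j| ≤ g j) (hg : Summable g) :
    |∑' j, f j| ≤ ∑' j, g j := by
  have hfa : Summable (fun j => |f j|) := Summable.of_nonneg_of_le (fun i => abs_nonneg _) h hg
  calc |∑' j, f j| ≤ ∑' j, |f j| := by
        simpa [Real.norm_eq_abs] using norm_tsum_le_tsum_norm (f := f)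
          (by simpa [Real.norm_eq_abs] using hfa)
    _ ≤ ∑' j, g j := Summable.tsum_le_tsum h hfa hg

private lemma summable_of_tsum_one {f : ℕ → ℝ} (h : ∑' i, f i = 1) : Summable f := by
  by_contra hs
  rw [tsum_eq_zero_of_not_summable hs] at h
  norm_num at h

private lemma split_tsum {f : ℕ → ℝ} (hf : Summable f) (k : ℕ) :
    ∑' j, f j = (∑' j, if j < k then f j else 0) + (∑' j, if k ≤ j then f j else 0) := by
  have h1 : Summable (fun j => if j < k then f j else 0) := by
    apply sd (g := fun j => |f j|) _ hf.abs
    intro j; by_cases h : j < k <;> simp [h]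
  have h2 : Summable (fun j => if k ≤ j then f j else 0) := by
    apply sd (g := fun j => |f j|) _ hf.abs
    intro j; by_cases h : k ≤ j <;> simp [h]
  rw [← Summable.tsum_add h1 h2]
  apply tsum_congr; intro j
  by_cases h : j < k
  · simp [h, not_le.2 h]
  · simp [h, not_lt.1 h]

private lemma truncAug_nonneg {P : ℕ → ℕ → ℝ} (hP : ∀ i j, 0 ≤ P i j) (k i j : ℕ) :
    0 ≤ truncAug P k i j := by
  unfold truncAug
  split_ifs with h1 h2 h3
  · exact hP i j
  · exact tsum_nonneg (fun l => by split_ifs with h; exacts [hP i l, le_refl 0])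
  · exact le_refl 0
  · exact le_refl 0

private lemma key_diff
    (P : ℕ → ℕ → ℝ) (hP : ∀ i j, 0 ≤ P i j) (hProw : ∀ i, Summable (P i))
    (hPstoch : ∀ i, ∑' j, P i j = 1)
    (V : ℕ → ℝ) (hV1 : ∀ n, 1 ≤ V n) (hVmono : Monotone V)
    (δ L : ℝ) (hδ0 : 0 < δ) (hL : 0 < L)
    (hsum : ∀ i, Summable (fun j => P i j * V j))
    (hdrift : ∀ i, ∑' j, P i j * V j ≤ δ * V i + L)
    (k i : ℕ) (g : ℕ → ℝ) (hg : ∀ j, |g j| ≤ 1) :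
    |(∑' j, truncAug P k i j * g j) - ∑' j, P i j * g j|
      ≤ max (2 * (δ + L)) 1 * V i / V k := by
  have hVk0 : (0:ℝ) < V k := lt_of_lt_of_le one_pos (hV1 k)
  have hVi0 : (0:ℝ) < V i := lt_of_lt_of_le one_pos (hV1 i)
  have hPg : Summable (fun j => P i j * g j) := by
    apply sd (g := P i) _ (hProw i)
    intro j
    rw [abs_mul, abs_of_nonneg (hP i j)]
    calc P i j * |g j| ≤ P i j * 1 := by
          exact mul_le_mul_of_nonneg_left (hg j) (hP i j)
      _ = P i j := mul_one _
  by_cases hik : i ≤ k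
  · -- main case
    set S : ℝ := ∑' l, (if k ≤ l then P i l else 0) with hS
    have h1s : Summable (fun j => if j < k then P i j * g j else 0) := by
      apply sd (g := P i) _ (hProw i)
      intro j
      split_ifs with h
      · rw [abs_mul, abs_of_nonneg (hP i j)]
        calc P i j * |g j| ≤ P i j * 1 := mul_le_mul_of_nonneg_left (hg j) (hP i j)
          _ = P i j := mul_one _
      · simpa using hP i j
    have h2s : Summable (fun j : ℕ => if j = k then S * g k else 0) :=
      summable_of_ne_finset_zero (s := {k}) (by intro b hb; simp at hb; simp [hb])
    have hhat : (∑' j, truncAug P k i j * g j)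
        = (∑' j, if j < k then P i j * g j else 0) + (∑' j : ℕ, if j = k then S * g k else 0) := by
      rw [← Summable.tsum_add h1s h2s]
      apply tsum_congr; intro j
      by_cases h : j < k
      · simp [truncAug, hik, h, Nat.ne_of_lt h]
      · by_cases h' : j = k
        · simp [truncAug, hik, h, h', hS]
        · simp [truncAug, hik, h, h']
    have h2v : (∑' j : ℕ, if j = k then S * g k else 0) = S * g k := by
      rw [tsum_eq_single k]
      · simp
      · intro b hb; simp [hb]
    have hSg : S * g k = ∑' l, (if k ≤ l then P i l * g k else 0) := by
      rw [hS, ← tsum_mul_right]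
      apply tsum_congr; intro l
      split_ifs <;> simp
    have hPsplit : (∑' j, P i j * g j)
        = (∑' j, if j < k then P i j * g j else 0) + (∑' j, if k ≤ j then P i j * g j else 0) :=
      split_tsum hPg k
    have htail1 : Summable (fun l => if k ≤ l then P i l * g k else 0) := by
      apply sd (g := P i) _ (hProw i)
      intro l
      split_ifs with h
      · rw [abs_mul, abs_of_nonneg (hP i l)]
        calc P i l * |g k| ≤ P i l * 1 := mul_le_mul_of_nonneg_left (hg k) (hP i l)
          _ = P i l := mul_one _
      · simpa using hP i l
    have htail2 : Summable (fun l => if k ≤ l then P i l * g l else 0) := by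
      apply sd (g := P i) _ (hProw i)
      intro l
      split_ifs with h
      · rw [abs_mul, abs_of_nonneg (hP i l)]
        calc P i l * |g l| ≤ P i l * 1 := mul_le_mul_of_nonneg_left (hg l) (hP i l)
          _ = P i l := mul_one _
      · simpa using hP i l
    have hdiff : (∑' j, truncAug P k i j * g j) - (∑' j, P i j * g j)
        = ∑' l, (if k ≤ l then P i l * (g k - g l) else 0) := by
      rw [hhat, h2v, hSg, hPsplit]
      have : (∑' l, (if k ≤ l then P i l * g k else 0)) - (∑' l, (if k ≤ l then P i l * g l else 0))
          = ∑' l, (if k ≤ l then P i l * (g k - g l) else 0) := by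
        rw [← Summable.tsum_sub htail1 htail2]
        apply tsum_congr; intro l
        split_ifs with h
        · ring
        · ring
      rw [← this]; ring
    rw [hdiff]
    have hbound : |∑' l, (if k ≤ l then P i l * (g k - g l) else 0)|
        ≤ ∑' l, (2 / V k) * (P i l * V l) := by
      apply abs_tsum_le_tsum _ ((hsum i).mul_left _)
      intro l
      split_ifs with h
      · have hgl : |g k - g l| ≤ 2 := by
          calc |g k - g l| ≤ |g k| + |g l| := abs_sub _ _
            _ ≤ 1 + 1 := add_le_add (hg k) (hg l)
            _ = 2 := by norm_num
        have h1 : |P i l * (g k - g l)| ≤ P i l * 2 := by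
          rw [abs_mul, abs_of_nonneg (hP i l)]
          exact mul_le_mul_of_nonneg_left hgl (hP i l)
        have h2 : P i l * 2 ≤ 2 / V k * (P i l * V l) := by
          have hVl : V k ≤ V l := hVmono h
          rw [div_mul_eq_mul_div, le_div_iff₀ hVk0]
          nlinarith [hP i l]
        linarith
      · rw [abs_zero]
        exact mul_nonneg (by positivity) (mul_nonneg (hP i l) (le_of_lt (lt_of_lt_of_le one_pos (hV1 l))))
    calc |∑' l, (if k ≤ l then P i l * (g k - g l) else 0)|
        ≤ ∑' l, (2 / V k) * (P i l * V l) := hbound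
      _ = 2 / V k * ∑' l, P i l * V l := tsum_mul_left
      _ ≤ 2 / V k * (δ * V i + L) := by
          apply mul_le_mul_of_nonneg_left (hdrift i) (by positivity)
      _ ≤ max (2 * (δ + L)) 1 * V i / V k := by
          rw [div_mul_eq_mul_div, div_le_div_iff₀ hVk0 hVk0]
          have hK : 2 * (δ + L) ≤ max (2 * (δ + L)) 1 := le_max_left _ _
          nlinarith [mul_nonneg (mul_nonneg (sub_nonneg.2 hK) (le_of_lt hVi0)) (le_of_lt hVk0),
            mul_nonneg (mul_nonneg (sub_nonneg.2 (hV1 i)) (le_of_lt hL)) (le_of_lt hVk0)]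
  · -- i > k : hat row is zero
    have hz : (∑' j, truncAug P k i j * g j) = 0 := by
      have : ∀ j, truncAug P k i j * g j = 0 := by
        intro j; simp [truncAug, hik]
      simp [this]
    rw [hz, zero_sub, abs_neg]
    have h1 : |∑' j, P i j * g j| ≤ ∑' j, P i j := by
      apply abs_tsum_le_tsum _ (hProw i)
      intro j
      rw [abs_mul, abs_of_nonneg (hP i j)]
      calc P i j * |g j| ≤ P i j * 1 := mul_le_mul_of_nonneg_left (hg j) (hP i j)
        _ = P i j := mul_one _
    rw [hPstoch i] at h1
    have hK1 : (1:ℝ) ≤ max (2 * (δ + L)) 1 := le_max_right _ _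
    have hki : V k ≤ V i := hVmono (le_of_not_ge hik)
    calc |∑' j, P i j * g j| ≤ 1 := h1
      _ ≤ max (2 * (δ + L)) 1 * V i / V k := by
          rw [le_div_iff₀ hVk0, one_mul]
          nlinarith

private lemma piV_bound
    (P : ℕ → ℕ → ℝ) (hP : ∀ i j, 0 ≤ P i j) (hProw : ∀ i, Summable (P i))
    (hPstoch : ∀ i, ∑' j, P i j = 1)
    (V : ℕ → ℝ) (hV1 : ∀ n, 1 ≤ V n)
    (δ L : ℝ) (hδ1 : δ < 1)
    (hsum : ∀ i, Summable (fun j => P i j * V j))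
    (hdrift : ∀ i, ∑' j, P i j * V j ≤ δ * V i + L)
    (π : ℕ → ℝ) (hπnonneg : ∀ j, 0 ≤ π j) (hπ1 : ∑' j, π j = 1)
    (hπV : Summable (fun j => π j * V j))
    (hπinv : ∀ j, ∑' i, π i * P i j = π j) :
    ∑' j, π j * V j ≤ L / (1 - δ) := by
  have hπs : Summable π := summable_of_tsum_one hπ1
  have hinner : ∀ i : ℕ, Summable (fun j => π i * (P i j * V j)) :=
    fun i => (hsum i).mul_left (π i)
  have hinner_eq : ∀ i : ℕ, (∑' j, π i * (P i j * V j)) = π i * ∑' j, P i j * V j :=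
    fun i => tsum_mul_left
  have hgs : Summable (fun i => δ * (π i * V i) + L * π i) :=
    (hπV.mul_left δ).add (hπs.mul_left L)
  have hptwise : ∀ i : ℕ, (∑' j, π i * (P i j * V j)) ≤ δ * (π i * V i) + L * π i := by
    intro i
    rw [hinner_eq i]
    calc π i * ∑' j, P i j * V j ≤ π i * (δ * V i + L) :=
          mul_le_mul_of_nonneg_left (hdrift i) (hπnonneg i)
      _ = δ * (π i * V i) + L * π i := by ring
  have houter : Summable (fun i => ∑' j, π i * (P i j * V j)) := by
    apply sd (g := fun i => δ * (π i * V i) + L * π i) _ hgs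
    intro i
    rw [abs_of_nonneg (tsum_nonneg (fun j => mul_nonneg (hπnonneg i)
      (mul_nonneg (hP i j) (le_of_lt (lt_of_lt_of_le one_pos (hV1 j))))))]
    exact hptwise i
  have hF : Summable (Function.uncurry (fun i j => π i * (P i j * V j))) := by
    refine (summable_prod_of_nonneg
      (f := Function.uncurry (fun i j => π i * (P i j * V j))) fun p => ?_).2 ⟨hinner, houter⟩
    exact mul_nonneg (hπnonneg p.1) (mul_nonneg (hP p.1 p.2)
      (le_of_lt (lt_of_lt_of_le one_pos (hV1 p.2))))
  have hstep1 : (∑' j, π j * V j) = ∑' (j) (i), π i * (P i j * V j) := by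
    apply tsum_congr; intro j
    rw [← hπinv j, ← tsum_mul_right]
    apply tsum_congr; intro i
    ring
  have hstep2 : (∑' (j) (i), π i * (P i j * V j)) = ∑' (i) (j), π i * (P i j * V j) :=
    Summable.tsum_comm hF
  have hstep3 : (∑' (i) (j : ℕ), π i * (P i j * V j)) ≤ δ * (∑' j, π j * V j) + L := by
    calc (∑' (i) (j : ℕ), π i * (P i j * V j)) ≤ ∑' i, (δ * (π i * V i) + L * π i) :=
          Summable.tsum_le_tsum hptwise houter hgs
      _ = δ * (∑' j, π j * V j) + L := by
          rw [Summable.tsum_add (hπV.mul_left δ) (hπs.mul_left L), tsum_mul_left, tsum_mul_left, hπ1,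
            mul_one]
  have hX : (∑' j, π j * V j) ≤ δ * (∑' j, π j * V j) + L := by
    calc (∑' j, π j * V j) = ∑' (i) (j), π i * (P i j * V j) := hstep1.trans hstep2
      _ ≤ δ * (∑' j, π j * V j) + L := hstep3
  rw [le_div_iff₀ (by linarith : (0:ℝ) < 1 - δ)]
  linarith

private lemma pi_P_invariant
    (P : ℕ → ℕ → ℝ) (hP : ∀ i j, 0 ≤ P i j) (hProw : ∀ i, Summable (P i))
    (hPstoch : ∀ i, ∑' j, P i j = 1)
    (π : ℕ → ℝ) (hπnonneg : ∀ j, 0 ≤ π j) (hπ1 : ∑' j, π j = 1)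
    (hπinv : ∀ j, ∑' i, π i * P i j = π j)
    (g : ℕ → ℝ) (hg : ∀ j, |g j| ≤ 1) :
    ∑' i, π i * (∑' j, P i j * g j) = ∑' j, π j * g j := by
  have hπs : Summable π := summable_of_tsum_one hπ1
  have hDinner : ∀ i : ℕ, Summable (fun j => π i * P i j) := fun i => (hProw i).mul_left (π i)
  have hDouter : Summable (fun i => ∑' j, π i * P i j) := by
    apply hπs.congr
    intro i
    rw [tsum_mul_left, hPstoch i, mul_one]
  have hDs : Summable (Function.uncurry (fun i j => π i * P i j)) := by
    refine (summable_prod_of_nonneg (f := Function.uncurry (fun i j => π i * P i j))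
      fun p => ?_).2 ⟨hDinner, hDouter⟩
    exact mul_nonneg (hπnonneg p.1) (hP p.1 p.2)
  have hfs : Summable (Function.uncurry (fun i j => π i * (P i j * g j))) := by
    apply sd (g := Function.uncurry (fun i j => π i * P i j)) _ hDs
    intro p
    simp only [Function.uncurry, abs_mul, abs_of_nonneg (hπnonneg p.1),
      abs_of_nonneg (hP p.1 p.2)]
    calc π p.1 * (P p.1 p.2 * |g p.2|) ≤ π p.1 * (P p.1 p.2 * 1) :=
          mul_le_mul_of_nonneg_left (mul_le_mul_of_nonneg_left (hg p.2) (hP p.1 p.2)) (hπnonneg p.1)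
      _ = π p.1 * P p.1 p.2 := by ring
  calc ∑' i, π i * (∑' j, P i j * g j) = ∑' (i) (j), π i * (P i j * g j) := by
        apply tsum_congr; intro i
        rw [tsum_mul_left]
    _ = ∑' (j) (i), π i * (P i j * g j) := (Summable.tsum_comm hfs).symm
    _ = ∑' j, π j * g j := by
        apply tsum_congr; intro j
        have h : (∑' i, π i * (P i j * g j)) = (∑' i, π i * P i j) * g j := by
          rw [← tsum_mul_right]
          apply tsum_congr; intro i
          ring
        rw [h, hπinv j]

private lemma truncAug_eq_zero_of_gt {P : ℕ → ℕ → ℝ} {k i j : ℕ} (h : k < j) :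
    truncAug P k i j = 0 := by
  have h1 : ¬ j < k := by omega
  have h2 : ¬ j = k := by omega
  simp [truncAug, h1, h2]

private lemma truncAug_summable {P : ℕ → ℕ → ℝ} (k i : ℕ) (g : ℕ → ℝ) :
    Summable (fun j => truncAug P k i j * g j) := by
  apply summable_of_ne_finset_zero (s := Finset.range (k+1))
  intro j hj
  rw [Finset.mem_range, not_lt] at hj
  rw [truncAug_eq_zero_of_gt (by omega), zero_mul]

private lemma truncAug_rowsum
    (P : ℕ → ℕ → ℝ) (hP : ∀ i j, 0 ≤ P i j) (hProw : ∀ i, Summable (P i))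
    (hPstoch : ∀ i, ∑' j, P i j = 1) (k i : ℕ) (hik : i ≤ k) :
    ∑' j, truncAug P k i j = 1 := by
  have h1s : Summable (fun j => if j < k then P i j else 0) := by
    apply sd (g := P i) _ (hProw i)
    intro j; split_ifs with h
    · rw [abs_of_nonneg (hP i j)]
    · simpa using hP i j
  have h2s : Summable (fun j : ℕ =>
      if j = k then (∑' l, if k ≤ l then P i l else 0) else 0) :=
    summable_of_ne_finset_zero (s := {k}) (by intro b hb; simp at hb; simp [hb])
  have hpt : ∀ j, truncAug P k i j = (if j < k then P i j else 0) +
      (if j = k then (∑' l, if k ≤ l then P i l else 0) else 0) := by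
    intro j
    by_cases h : j < k
    · simp [truncAug, hik, h, Nat.ne_of_lt h]
    · by_cases h' : j = k
      · simp [truncAug, hik, h, h']
      · simp [truncAug, hik, h, h']
  have h2v : (∑' j : ℕ, if j = k then (∑' l, if k ≤ l then P i l else 0) else 0)
      = (∑' l, if k ≤ l then P i l else 0) := by
    rw [tsum_eq_single k (fun b hb => by simp [hb])]
    simp
  rw [tsum_congr hpt, Summable.tsum_add h1s h2s, h2v, ← split_tsum (hProw i) k, hPstoch i]

/- STATEMENT 18: In the discrete truncation setting (drift `P V ≤ δ V + L`, invariant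
probability `π` of `P` with `π(V) < ∞`, `π̂ₖ` the extension of the `Pₖ`-invariant probability,
`φₖ = 1_{Bₖ}`):
`π̂ₖ(1)·|1 − π(φₖ)| = Σ_{j>k} π(j) ≤ π(V)/V(k) ≤ L/((1−δ)V(k))`, and combining with the
general total-variation bound (for `V(k) ≥ K`),
`‖π̂ₖ − π‖_TV ≤ (L/(1−δ))·(1 + 2KCₖ/ρₖ + A·K·ln V(k)/ln(ρₖ⁻¹))·(1/V(k))`,
where `K = max(2(δ+L),1)`, `A = 1 + L/(1−δ)` and `(ρₖ, Cₖ)` is a rate and constant in the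
`V`-geometric ergodicity of `P̂ₖ`. -/
theorem truncation_tv_bound_discrete
    (P : ℕ → ℕ → ℝ)
    (hPnonneg : ∀ i j, 0 ≤ P i j)
    (hProw : ∀ i, Summable (P i))
    (hPstoch : ∀ i, ∑' j, P i j = 1)
    (V : ℕ → ℝ) (hV1 : ∀ n, 1 ≤ V n) (hV0 : V 0 = 1) (hVmono : Monotone V)
    (hVtop : Filter.Tendsto V Filter.atTop Filter.atTop)
    (δ L : ℝ) (hδ0 : 0 < δ) (hδ1 : δ < 1) (hL : 0 < L)
    (hsum : ∀ i, Summable (fun j => P i j * V j))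
    (hdrift : ∀ i, ∑' j, P i j * V j ≤ δ * V i + L)
    -- π : the P-invariant probability measure, with π(V) < ∞
    (π : ℕ → ℝ) (hπnonneg : ∀ j, 0 ≤ π j) (hπ1 : ∑' j, π j = 1)
    (hπV : Summable (fun j => π j * V j))
    (hπinv : ∀ j, ∑' i, π i * P i j = π j)
    (k : ℕ) (hk : 1 ≤ k)
    -- π̂ₖ : the extension of the Pₖ-invariant probability measure, supported on {0,…,k}
    (πk : ℕ → ℝ) (hπknonneg : ∀ j, 0 ≤ πk j) (hπk1 : ∑' j, πk j = 1)
    (hπksupp : ∀ j, k < j → πk j = 0)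
    (hπkinv : ∀ j, ∑' i, πk i * truncAug P k i j = πk j)
    -- V-geometric ergodicity of P̂ₖ with rate ρₖ and constant Cₖ (φₖ = 1_{Bₖ})
    (Phatop : Module.End ℝ (ℕ → ℝ))
    (hPhatop : ∀ f : ℕ → ℝ, ∀ i, Phatop f i = ∑' j, truncAug P k i j * f j)
    (ρk Ck : ℝ) (hρk0 : 0 < ρk) (hρk1 : ρk < 1) (hCk : 0 < Ck)
    (hgeo : ∀ (n : ℕ) (f : ℕ → ℝ), (∀ j, |f j| ≤ V j) →
      ∀ i, |(Phatop ^ n) f i - (∑' j, πk j * f j) * (if i ≤ k then (1 : ℝ) else 0)|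
        ≤ Ck * ρk ^ n * V i)
    -- V(k) ≥ K so that |ln Δₖ| ≤ ln V(k)
    (hVk : max (2 * (δ + L)) 1 ≤ V k) :
    (∑' j, (if k < j then π j else 0)) ≤ (∑' j, π j * V j) / V k ∧
    (∑' j, π j * V j) / V k ≤ L / ((1 - δ) * V k) ∧
    (∀ f : ℕ → ℝ, (∀ j, |f j| ≤ 1) →
      |(∑' j, πk j * f j) - ∑' j, π j * f j| ≤
        L / (1 - δ) *
          (1 + 2 * max (2 * (δ + L)) 1 * Ck / ρk +
            (1 + L / (1 - δ)) * max (2 * (δ + L)) 1 * Real.log (V k) / Real.log ρk⁻¹)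
          / V k) := by
  have hπs : Summable π := summable_of_tsum_one hπ1
  have hπks : Summable πk := summable_of_tsum_one hπk1
  have hVk0 : (0:ℝ) < V k := lt_of_lt_of_le one_pos (hV1 k)
  have h1δ : (0:ℝ) < 1 - δ := by linarith
  have hM0 : (0:ℝ) < L / (1 - δ) := by positivity
  have hXM : (∑' j, π j * V j) ≤ L / (1 - δ) :=
    piV_bound P hPnonneg hProw hPstoch V hV1 δ L hδ1 hsum hdrift π hπnonneg hπ1 hπV hπinv
  have hX0 : (0:ℝ) ≤ ∑' j, π j * V j :=
    tsum_nonneg (fun j => mul_nonneg (hπnonneg j) (by linarith [hV1 j]))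
  have htailS : Summable (fun j => if k < j then π j else 0) := by
    apply sd (g := π) _ hπs
    intro j; split_ifs with h
    · rw [abs_of_nonneg (hπnonneg j)]
    · simpa using hπnonneg j
  have hpart1 : (∑' j, (if k < j then π j else 0)) ≤ (∑' j, π j * V j) / V k := by
    rw [← tsum_div_const]
    apply Summable.tsum_le_tsum _ htailS (hπV.div_const _)
    intro j
    split_ifs with h
    · have hVj : V k ≤ V j := hVmono (le_of_lt h)
      rw [le_div_iff₀ hVk0]
      nlinarith [hπnonneg j, hV1 j]
    · exact div_nonneg (mul_nonneg (hπnonneg j) (by linarith [hV1 j])) hVk0.le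
  refine ⟨hpart1, ?_, ?_⟩
  · rw [← div_div]
    gcongr
  intro f hf
  have hfV : ∀ j, |f j| ≤ V j := fun j => le_trans (hf j) (hV1 j)
  have hK1 : (1:ℝ) ≤ max (2 * (δ + L)) 1 := le_max_right _ _
  have hK0 : (0:ℝ) < max (2 * (δ + L)) 1 := lt_of_lt_of_le one_pos hK1
  -- Ck ≥ 1
  have hCk1 : (1:ℝ) ≤ Ck := by
    have h := hgeo 0 V (fun j => by
      rw [abs_of_nonneg (by linarith [hV1 j] : (0:ℝ) ≤ V j)]) (k+1)
    rw [pow_zero, pow_zero, Module.End.one_apply, if_neg (by omega : ¬ k+1 ≤ k)] at h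
    have hVk1 : (0:ℝ) < V (k+1) := lt_of_lt_of_le one_pos (hV1 _)
    rw [mul_zero, sub_zero, abs_of_pos hVk1] at h
    nlinarith
  -- boundedness of iterates
  have hhatb : ∀ g : ℕ → ℝ, (∀ j, |g j| ≤ 1) → ∀ i, |∑' j, truncAug P k i j * g j| ≤ 1 := by
    intro g hg i
    by_cases hik : i ≤ k
    · have hrowS : Summable (fun j => truncAug P k i j) := by
        simpa using truncAug_summable (P := P) k i (fun _ => 1)
      calc |∑' j, truncAug P k i j * g j| ≤ ∑' j, truncAug P k i j := by
            apply abs_tsum_le_tsum _ hrowS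
            intro j
            rw [abs_mul, abs_of_nonneg (truncAug_nonneg hPnonneg k i j)]
            calc truncAug P k i j * |g j| ≤ truncAug P k i j * 1 :=
                  mul_le_mul_of_nonneg_left (hg j) (truncAug_nonneg hPnonneg k i j)
              _ = truncAug P k i j := mul_one _
        _ = 1 := truncAug_rowsum P hPnonneg hProw hPstoch k i hik
    · have : ∀ j, truncAug P k i j * g j = 0 := by
        intro j; simp [truncAug, hik]
      rw [tsum_congr this]
      simp
  have hbdd : ∀ m : ℕ, ∀ j, |(Phatop ^ m) f j| ≤ 1 := by
    intro m
    induction m with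
    | zero => intro j; rw [pow_zero, Module.End.one_apply]; exact hf j
    | succ m ih =>
      intro i
      rw [show (Phatop ^ (m+1)) f = Phatop ((Phatop ^ m) f) by
        rw [pow_succ', Module.End.mul_apply], hPhatop]
      exact hhatb _ ih i
  have hPgb : ∀ g : ℕ → ℝ, (∀ j, |g j| ≤ 1) → ∀ i, |∑' j, P i j * g j| ≤ 1 := by
    intro g hg i
    calc |∑' j, P i j * g j| ≤ ∑' j, P i j := by
          apply abs_tsum_le_tsum _ (hProw i)
          intro j
          rw [abs_mul, abs_of_nonneg (hPnonneg i j)]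
          calc P i j * |g j| ≤ P i j * 1 := mul_le_mul_of_nonneg_left (hg j) (hPnonneg i j)
            _ = P i j := mul_one _
      _ = 1 := hPstoch i
  have hsummul : ∀ h : ℕ → ℝ, (∀ i, |h i| ≤ 1) → Summable (fun i => π i * h i) := by
    intro h hh
    apply sd (g := π) _ hπs
    intro i
    rw [abs_mul, abs_of_nonneg (hπnonneg i)]
    calc π i * |h i| ≤ π i * 1 := mul_le_mul_of_nonneg_left (hh i) (hπnonneg i)
      _ = π i := mul_one _
  -- single telescoping step
  have htel : ∀ m : ℕ,
      |(∑' i, π i * (Phatop ^ (m+1)) f i) - (∑' i, π i * (Phatop ^ m) f i)|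
        ≤ max (2 * (δ + L)) 1 / V k * (∑' j, π j * V j) := by
    intro m
    have hgb : ∀ j, |(Phatop ^ m) f j| ≤ 1 := hbdd m
    have hstep : ∀ i, (Phatop ^ (m+1)) f i = ∑' j, truncAug P k i j * (Phatop ^ m) f j := by
      intro i
      rw [show (Phatop ^ (m+1)) f = Phatop ((Phatop ^ m) f) by
        rw [pow_succ', Module.End.mul_apply], hPhatop]
    have hmid : (∑' i, π i * (Phatop ^ m) f i)
        = ∑' i, π i * (∑' j, P i j * (Phatop ^ m) f j) :=
      (pi_P_invariant P hPnonneg hProw hPstoch π hπnonneg hπ1 hπinv _ hgb).symm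
    have hS1 : Summable (fun i => π i * (∑' j, truncAug P k i j * (Phatop ^ m) f j)) :=
      hsummul _ (hhatb _ hgb)
    have hS2 : Summable (fun i => π i * (∑' j, P i j * (Phatop ^ m) f j)) :=
      hsummul _ (hPgb _ hgb)
    have hLHS : (∑' i, π i * (Phatop ^ (m+1)) f i)
        = ∑' i, π i * (∑' j, truncAug P k i j * (Phatop ^ m) f j) :=
      tsum_congr (fun i => by rw [hstep i])
    rw [hLHS, hmid, ← Summable.tsum_sub hS1 hS2]
    have hdom : Summable (fun i => max (2 * (δ + L)) 1 / V k * (π i * V i)) :=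
      hπV.mul_left _
    calc |∑' i, (π i * (∑' j, truncAug P k i j * (Phatop ^ m) f j)
            - π i * (∑' j, P i j * (Phatop ^ m) f j))|
        ≤ ∑' i, max (2 * (δ + L)) 1 / V k * (π i * V i) := by
          apply abs_tsum_le_tsum _ hdom
          intro i
          rw [← mul_sub, abs_mul, abs_of_nonneg (hπnonneg i)]
          have hkd := key_diff P hPnonneg hProw hPstoch V hV1 hVmono δ L hδ0 hL hsum hdrift
            k i _ hgb
          calc π i * |(∑' j, truncAug P k i j * (Phatop ^ m) f j)
                - ∑' j, P i j * (Phatop ^ m) f j|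
              ≤ π i * (max (2 * (δ + L)) 1 * V i / V k) :=
                mul_le_mul_of_nonneg_left hkd (hπnonneg i)
            _ = max (2 * (δ + L)) 1 / V k * (π i * V i) := by ring
      _ = max (2 * (δ + L)) 1 / V k * ∑' j, π j * V j := tsum_mul_left
  -- full telescoping
  have htot : ∀ n : ℕ, |(∑' i, π i * (Phatop ^ n) f i) - (∑' j, π j * f j)|
      ≤ (n : ℝ) * (max (2 * (δ + L)) 1 / V k * (∑' j, π j * V j)) := by
    intro n
    induction n with
    | zero =>
      have : (∑' i, π i * (Phatop ^ 0) f i) = ∑' j, π j * f j := by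
        apply tsum_congr; intro i
        rw [pow_zero, Module.End.one_apply]
      rw [this]
      simp
    | succ n ih =>
      have h1 := htel n
      calc |(∑' i, π i * (Phatop ^ (n+1)) f i) - (∑' j, π j * f j)|
          = |((∑' i, π i * (Phatop ^ (n+1)) f i) - (∑' i, π i * (Phatop ^ n) f i))
              + ((∑' i, π i * (Phatop ^ n) f i) - (∑' j, π j * f j))| := by
            ring_nf
        _ ≤ |(∑' i, π i * (Phatop ^ (n+1)) f i) - (∑' i, π i * (Phatop ^ n) f i)|
              + |(∑' i, π i * (Phatop ^ n) f i) - (∑' j, π j * f j)| := abs_add_le _ _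
        _ ≤ max (2 * (δ + L)) 1 / V k * (∑' j, π j * V j)
              + (n : ℝ) * (max (2 * (δ + L)) 1 / V k * (∑' j, π j * V j)) := add_le_add h1 ih
        _ = ((n+1 : ℕ) : ℝ) * (max (2 * (δ + L)) 1 / V k * (∑' j, π j * V j)) := by
            push_cast; ring
  -- term A : geometric ergodicity
  have hcb : |∑' j, πk j * f j| ≤ 1 := by
    calc |∑' j, πk j * f j| ≤ ∑' j, πk j := by
          apply abs_tsum_le_tsum _ hπks
          intro j
          rw [abs_mul, abs_of_nonneg (hπknonneg j)]
          calc πk j * |f j| ≤ πk j * 1 := mul_le_mul_of_nonneg_left (hf j) (hπknonneg j)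
            _ = πk j := mul_one _
      _ = 1 := hπk1
  have hχS : Summable (fun i => π i * (if i ≤ k then (1:ℝ) else 0)) := by
    apply sd (g := π) _ hπs
    intro i
    split_ifs with h
    · rw [mul_one, abs_of_nonneg (hπnonneg i)]
    · simpa using hπnonneg i
  have hA : ∀ n : ℕ, |(∑' j, πk j * f j) - (∑' i, π i * (Phatop ^ n) f i)| ≤
      (∑' j, (if k < j then π j else 0)) + Ck * ρk ^ n * (∑' j, π j * V j) := by
    intro n
    have heb : ∀ i, |(Phatop ^ n) f i - (∑' j, πk j * f j) * (if i ≤ k then (1:ℝ) else 0)|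
        ≤ Ck * ρk ^ n * V i := hgeo n f hfV
    have heS : Summable (fun i =>
        π i * ((Phatop ^ n) f i - (∑' j, πk j * f j) * (if i ≤ k then (1:ℝ) else 0))) := by
      apply sd (g := fun i => Ck * ρk ^ n * (π i * V i)) _ (hπV.mul_left _)
      intro i
      rw [abs_mul, abs_of_nonneg (hπnonneg i)]
      calc π i * |(Phatop ^ n) f i - (∑' j, πk j * f j) * (if i ≤ k then (1:ℝ) else 0)|
          ≤ π i * (Ck * ρk ^ n * V i) := mul_le_mul_of_nonneg_left (heb i) (hπnonneg i)
        _ = Ck * ρk ^ n * (π i * V i) := by ring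
    have hsplit : (∑' i, π i * (Phatop ^ n) f i)
        = (∑' j, πk j * f j) * (∑' i, π i * (if i ≤ k then (1:ℝ) else 0))
          + ∑' i, π i * ((Phatop ^ n) f i
              - (∑' j, πk j * f j) * (if i ≤ k then (1:ℝ) else 0)) := by
      rw [← tsum_mul_left, ← Summable.tsum_add (hχS.mul_left _) heS]
      apply tsum_congr; intro i
      ring
    have hβ : (∑' i, π i * (if i ≤ k then (1:ℝ) else 0))
        + (∑' j, (if k < j then π j else 0)) = 1 := by
      calc (∑' i, π i * (if i ≤ k then (1:ℝ) else 0)) + (∑' j, (if k < j then π j else 0))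
          = ∑' i, (π i * (if i ≤ k then (1:ℝ) else 0) + (if k < i then π i else 0)) :=
            (Summable.tsum_add hχS htailS).symm
        _ = ∑' i, π i := by
            apply tsum_congr; intro i
            by_cases h : i ≤ k
            · simp [h, not_lt.2 h]
            · simp [h, not_le.1 h]
        _ = 1 := hπ1
    have hE : |∑' i, π i * ((Phatop ^ n) f i
        - (∑' j, πk j * f j) * (if i ≤ k then (1:ℝ) else 0))|
        ≤ Ck * ρk ^ n * (∑' j, π j * V j) := by
      calc |∑' i, π i * ((Phatop ^ n) f i
            - (∑' j, πk j * f j) * (if i ≤ k then (1:ℝ) else 0))|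
          ≤ ∑' i, Ck * ρk ^ n * (π i * V i) := by
            apply abs_tsum_le_tsum _ (hπV.mul_left _)
            intro i
            rw [abs_mul, abs_of_nonneg (hπnonneg i)]
            calc π i * |(Phatop ^ n) f i - (∑' j, πk j * f j) * (if i ≤ k then (1:ℝ) else 0)|
                ≤ π i * (Ck * ρk ^ n * V i) := mul_le_mul_of_nonneg_left (heb i) (hπnonneg i)
              _ = Ck * ρk ^ n * (π i * V i) := by ring
        _ = Ck * ρk ^ n * (∑' j, π j * V j) := tsum_mul_left
    have hT0 : (0:ℝ) ≤ ∑' j, (if k < j then π j else 0) :=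
      tsum_nonneg (fun j => by split_ifs with h; exacts [hπnonneg j, le_refl 0])
    have hrw : (∑' j, πk j * f j) - (∑' i, π i * (Phatop ^ n) f i)
        = (∑' j, πk j * f j) * (∑' j, (if k < j then π j else 0))
          - ∑' i, π i * ((Phatop ^ n) f i
              - (∑' j, πk j * f j) * (if i ≤ k then (1:ℝ) else 0)) := by
      rw [hsplit]
      have hβ' : (∑' i, π i * (if i ≤ k then (1:ℝ) else 0))
          = 1 - (∑' j, (if k < j then π j else 0)) := by linarith
      rw [hβ']
      ring
    rw [hrw]
    calc |(∑' j, πk j * f j) * (∑' j, (if k < j then π j else 0))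
          - ∑' i, π i * ((Phatop ^ n) f i
              - (∑' j, πk j * f j) * (if i ≤ k then (1:ℝ) else 0))|
        ≤ |(∑' j, πk j * f j) * (∑' j, (if k < j then π j else 0))|
          + |∑' i, π i * ((Phatop ^ n) f i
              - (∑' j, πk j * f j) * (if i ≤ k then (1:ℝ) else 0))| := abs_sub _ _
      _ ≤ (∑' j, (if k < j then π j else 0)) + Ck * ρk ^ n * (∑' j, π j * V j) := by
          apply add_le_add _ hE
          rw [abs_mul, abs_of_nonneg hT0]
          calc |∑' j, πk j * f j| * (∑' j, (if k < j then π j else 0))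
              ≤ 1 * (∑' j, (if k < j then π j else 0)) :=
                mul_le_mul_of_nonneg_right hcb hT0
            _ = ∑' j, (if k < j then π j else 0) := one_mul _
  -- choose n
  have hlρneg : Real.log ρk < 0 := Real.log_neg hρk0 hρk1
  have hlogρ : 0 < Real.log ρk⁻¹ := Real.log_pos ((one_lt_inv₀ hρk0).2 hρk1)
  have hx0 : 0 ≤ Real.log (V k) / Real.log ρk⁻¹ :=
    div_nonneg (Real.log_nonneg (hV1 k)) hlogρ.le
  set x : ℝ := Real.log (V k) / Real.log ρk⁻¹ with hx
  set n : ℕ := ⌈x⌉₊ with hn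
  have hxn : x ≤ (n:ℝ) := Nat.le_ceil x
  have hn1 : (n:ℝ) ≤ x + 1 := (Nat.ceil_lt_add_one hx0).le
  have hρn : ρk ^ n ≤ 1 / V k := by
    have h1 : ρk ^ n ≤ ρk ^ (x:ℝ) := by
      rw [← Real.rpow_natCast]
      exact Real.rpow_le_rpow_of_exponent_ge hρk0 hρk1.le hxn
    have h2 : ρk ^ (x:ℝ) = 1 / V k := by
      rw [Real.rpow_def_of_pos hρk0]
      have hlρ0 : Real.log ρk ≠ 0 := ne_of_lt hlρneg
      have hlv : Real.log ρk * x = - Real.log (V k) := by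
        rw [hx, Real.log_inv, mul_div_assoc']
        rw [mul_comm, mul_div_assoc, div_neg, div_self hlρ0]
        ring
      rw [hlv, Real.exp_neg, Real.exp_log hVk0, one_div]
    rw [← h2]
    exact h1
  -- combine
  have hmain : |(∑' j, πk j * f j) - ∑' j, π j * f j|
      ≤ (∑' j, (if k < j then π j else 0)) + Ck * ρk ^ n * (∑' j, π j * V j)
        + (n : ℝ) * (max (2 * (δ + L)) 1 / V k * (∑' j, π j * V j)) := by
    calc |(∑' j, πk j * f j) - ∑' j, π j * f j|
        = |((∑' j, πk j * f j) - (∑' i, π i * (Phatop ^ n) f i))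
            + ((∑' i, π i * (Phatop ^ n) f i) - ∑' j, π j * f j)| := by ring_nf
      _ ≤ |(∑' j, πk j * f j) - (∑' i, π i * (Phatop ^ n) f i)|
            + |(∑' i, π i * (Phatop ^ n) f i) - ∑' j, π j * f j| := abs_add_le _ _
      _ ≤ ((∑' j, (if k < j then π j else 0)) + Ck * ρk ^ n * (∑' j, π j * V j))
            + (n : ℝ) * (max (2 * (δ + L)) 1 / V k * (∑' j, π j * V j)) :=
          add_le_add (hA n) (htot n)
      _ = (∑' j, (if k < j then π j else 0)) + Ck * ρk ^ n * (∑' j, π j * V j)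
            + (n : ℝ) * (max (2 * (δ + L)) 1 / V k * (∑' j, π j * V j)) := by ring
  -- numeric estimates
  have hMVk : (∑' j, π j * V j) / V k ≤ (L / (1 - δ)) / V k := by gcongr
  have e1 : (∑' j, (if k < j then π j else 0)) ≤ (L / (1 - δ)) / V k :=
    hpart1.trans hMVk
  have e2 : Ck * ρk ^ n * (∑' j, π j * V j) ≤ Ck * ((L / (1 - δ)) / V k) := by
    have hρn0 : 0 ≤ ρk ^ n := le_of_lt (pow_pos hρk0 n)
    calc Ck * ρk ^ n * (∑' j, π j * V j) ≤ (Ck * (1 / V k)) * (L / (1 - δ)) :=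
          mul_le_mul (mul_le_mul_of_nonneg_left hρn (by linarith)) hXM hX0 (by positivity)
      _ = Ck * ((L / (1 - δ)) / V k) := by ring
  have e3 : (n : ℝ) * (max (2 * (δ + L)) 1 / V k * (∑' j, π j * V j))
      ≤ (x + 1) * (max (2 * (δ + L)) 1 * ((L / (1 - δ)) / V k)) := by
    have hpos : 0 ≤ max (2 * (δ + L)) 1 / V k * (∑' j, π j * V j) := by
      apply mul_nonneg _ hX0
      positivity
    calc (n : ℝ) * (max (2 * (δ + L)) 1 / V k * (∑' j, π j * V j))
        ≤ (x + 1) * (max (2 * (δ + L)) 1 / V k * (∑' j, π j * V j)) :=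
          mul_le_mul_of_nonneg_right hn1 hpos
      _ ≤ (x + 1) * (max (2 * (δ + L)) 1 / V k * (L / (1 - δ))) := by
          apply mul_le_mul_of_nonneg_left _ (by linarith)
          apply mul_le_mul_of_nonneg_left hXM
          positivity
      _ = (x + 1) * (max (2 * (δ + L)) 1 * ((L / (1 - δ)) / V k)) := by ring
  -- final arithmetic
  have hfinal : (L / (1 - δ)) / V k + Ck * ((L / (1 - δ)) / V k)
      + (x + 1) * (max (2 * (δ + L)) 1 * ((L / (1 - δ)) / V k))
      ≤ L / (1 - δ) *
          (1 + 2 * max (2 * (δ + L)) 1 * Ck / ρk +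
            (1 + L / (1 - δ)) * max (2 * (δ + L)) 1 * Real.log (V k) / Real.log ρk⁻¹)
          / V k := by
    have hcoef : 1 + Ck + (x + 1) * max (2 * (δ + L)) 1
        ≤ 1 + 2 * max (2 * (δ + L)) 1 * Ck / ρk
          + (1 + L / (1 - δ)) * max (2 * (δ + L)) 1 * x := by
      have h2a : Ck + max (2 * (δ + L)) 1 ≤ 2 * max (2 * (δ + L)) 1 * Ck := by
        nlinarith [mul_nonneg (sub_nonneg.2 hK1) (sub_nonneg.2 hCk1)]
      have h2b : 2 * max (2 * (δ + L)) 1 * Ck ≤ 2 * max (2 * (δ + L)) 1 * Ck / ρk := by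
        rw [le_div_iff₀ hρk0]
        nlinarith [mul_pos hK0 hCk]
      have h2c : max (2 * (δ + L)) 1 * x ≤ (1 + L / (1 - δ)) * max (2 * (δ + L)) 1 * x := by
        nlinarith [mul_nonneg hK0.le hx0]
      linarith
    have hq : 0 ≤ (L / (1 - δ)) / V k := by positivity
    calc (L / (1 - δ)) / V k + Ck * ((L / (1 - δ)) / V k)
          + (x + 1) * (max (2 * (δ + L)) 1 * ((L / (1 - δ)) / V k))
        = (1 + Ck + (x + 1) * max (2 * (δ + L)) 1) * ((L / (1 - δ)) / V k) := by ring
      _ ≤ (1 + 2 * max (2 * (δ + L)) 1 * Ck / ρk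
            + (1 + L / (1 - δ)) * max (2 * (δ + L)) 1 * x) * ((L / (1 - δ)) / V k) :=
          mul_le_mul_of_nonneg_right hcoef hq
      _ = L / (1 - δ) *
          (1 + 2 * max (2 * (δ + L)) 1 * Ck / ρk +
            (1 + L / (1 - δ)) * max (2 * (δ + L)) 1 * Real.log (V k) / Real.log ρk⁻¹)
          / V k := by
          rw [hx]
          ring
  calc |(∑' j, πk j * f j) - ∑' j, π j * f j|
      ≤ (∑' j, (if k < j then π j else 0)) + Ck * ρk ^ n * (∑' j, π j * V j)
        + (n : ℝ) * (max (2 * (δ + L)) 1 / V k * (∑' j, π j * V j)) := hmain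
    _ ≤ (L / (1 - δ)) / V k + Ck * ((L / (1 - δ)) / V k)
        + (x + 1) * (max (2 * (δ + L)) 1 * ((L / (1 - δ)) / V k)) :=
        add_le_add (add_le_add e1 e2) e3
    _ ≤ _ := hfinal
end
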